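/- arXiv:1010.0299 — 5 statements merged into one kernel-verified Lean document; each statement's English description precedes it below -/
import Mathlib

section
/- Let f_1 and f_2 be entire functions, φ(z) = az + b an affine map with a ≠ 0 such that f_2 = φ^{-1} ∘ f_1 ∘ φ on ℂ. Let L_1 be a linearizer of f_1 at a repelling fixed point z_1 and L_2 a linearizer of f_2 at z_2 = φ^{-1}(z_1) with L_1'(0) = L_2'(0). Then L_2(z) = φ^{-1}(L_1(az)) for all z ∈ ℂ. -/
open Filter Topology Asymptotics

theorem linearizers_of_affinely_conjugate_maps (f₁ f₂ L₁ L₂ : ℂ → ℂ) (a b z₁ : ℂ)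
    (ha : a ≠ 0)
    (hf₁ : Differentiable ℂ f₁) (hf₂ : Differentiable ℂ f₂)
    (hconj : ∀ z : ℂ, f₂ z = (f₁ (a * z + b) - b) / a)
    (hfix : f₁ z₁ = z₁) (hrep : 1 < ‖deriv f₁ z₁‖)
    (hL₁ : Differentiable ℂ L₁) (hL₁0 : L₁ 0 = z₁)
    (hL₁eq : ∀ z : ℂ, f₁ (L₁ z) = L₁ (deriv f₁ z₁ * z))
    (hL₂ : Differentiable ℂ L₂) (hL₂0 : L₂ 0 = (z₁ - b) / a)
    (hL₂eq : ∀ z : ℂ, f₂ (L₂ z) = L₂ (deriv f₂ ((z₁ - b) / a) * z))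
    (hnorm : deriv L₁ 0 = deriv L₂ 0) :
    ∀ z : ℂ, L₂ z = (L₁ (a * z) - b) / a := by
  set l := deriv f₁ z₁ with hl
  have hl0 : l ≠ 0 := by
    intro h; rw [h, norm_zero] at hrep; linarith
  set z₂ : ℂ := (z₁ - b) / a with hz₂def
  have hz₂ : a * z₂ + b = z₁ := by rw [hz₂def]; field_simp; ring
  set M : ℂ → ℂ := fun z => (L₁ (a * z) - b) / a with hMdef
  have hM : Differentiable ℂ M :=
    ((hL₁.comp ((differentiable_id).const_mul a)).sub_const b).div_const a
  have hM0 : M 0 = z₂ := by simp [hMdef, hL₁0, hz₂def]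
  have hf₂eq : f₂ = fun z => (f₁ (a * z + b) - b) / a := funext hconj
  have hd2 : deriv f₂ z₂ = l := by
    have h1 : HasDerivAt (fun z : ℂ => a * z + b) a z₂ := by
      simpa using ((hasDerivAt_id z₂).const_mul a).add_const b
    have h2 : HasDerivAt (fun z : ℂ => (f₁ (a * z + b) - b) / a) (deriv f₁ (a * z₂ + b) * a / a)
        z₂ := (((hf₁ _).hasDerivAt.comp z₂ h1).sub_const b).div_const a
    rw [hz₂, mul_div_cancel_right₀ _ ha] at h2
    rw [hf₂eq]
    exact h2.deriv
  have hL₂eq' : ∀ z : ℂ, f₂ (L₂ z) = L₂ (l * z) := by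
    intro z; rw [← hd2]; exact hL₂eq z
  have hMeq : ∀ z : ℂ, f₂ (M z) = M (l * z) := by
    intro z
    have hMz : a * M z + b = L₁ (a * z) := by
      rw [hMdef]; field_simp; ring
    rw [hconj, hMz, hL₁eq]
    rw [hMdef]
    rw [show l * (a * z) = a * (l * z) by ring]
  have hdM : deriv M 0 = deriv L₁ 0 := by
    have h1 : HasDerivAt (fun z : ℂ => a * z) a 0 := by
      simpa using (hasDerivAt_id (0:ℂ)).const_mul a
    have h2 : HasDerivAt M (deriv L₁ (a * 0) * a / a) 0 :=
      (((hL₁ _).hasDerivAt.comp 0 h1).sub_const b).div_const a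
    rw [mul_zero, mul_div_cancel_right₀ _ ha] at h2
    exact h2.deriv
  set g : ℂ → ℂ := fun z => L₂ z - M z with hgdef
  have hg : Differentiable ℂ g := hL₂.sub hM
  have hg0 : g 0 = 0 := by simp [hgdef, hL₂0, hM0]
  have hdg : deriv g 0 = 0 := by
    rw [hgdef]
    rw [deriv_fun_sub (hL₂ 0) (hM 0), hdM, hnorm, sub_self]
  have hgfe : ∀ z : ℂ, g (l * z) = f₂ (L₂ z) - f₂ (M z) := by
    intro z; rw [hgdef]; simp only [hL₂eq' z, hMeq z]
  have hga : AnalyticAt ℂ g 0 := hg.analyticAt 0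
  have horder : analyticOrderAt g 0 = ⊤ := by
    by_contra hne
    obtain ⟨n, hn⟩ := WithTop.ne_top_iff_exists.mp hne
    obtain ⟨h, hha, hh0, hev⟩ := (hga.analyticOrderAt_eq_natCast (n := n)).mp hn.symm
    simp only [sub_zero, smul_eq_mul] at hev
    have hn2 : 2 ≤ n := by
      by_contra hlt
      interval_cases n
      · exact hh0 (by simpa [hg0] using hev.self_of_nhds.symm)
      · have hd : HasDerivAt (fun z : ℂ => z ^ 1 * h z) (h 0) 0 := by
          have := (hasDerivAt_pow 1 (0:ℂ)).fun_mul (hha.differentiableAt.hasDerivAt)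
          simpa using this
        have hgd : HasDerivAt g (h 0) 0 := hd.congr_of_eventuallyEq hev
        exact hh0 (by rw [← hgd.deriv]; exact hdg)
    have hhc : ContinuousAt h 0 := hha.continuousAt
    have hevne : ∀ᶠ z in 𝓝 (0:ℂ), h z ≠ 0 := hhc.eventually_ne hh0
    have hmap : Filter.Tendsto (fun z : ℂ => l * z) (𝓝 0) (𝓝 0) := by
      simpa using (continuous_mul_left l).tendsto (0:ℂ)
    have hev' : ∀ᶠ z in 𝓝 (0:ℂ), g (l * z) = (l * z) ^ n * h (l * z) := hmap.eventually hev
    have hT1 : Tendsto (fun z : ℂ => g (l * z) / z ^ n) (𝓝[≠] 0) (𝓝 (l ^ n * h 0)) := by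
      have hth : Tendsto (fun z : ℂ => l ^ n * h (l * z)) (𝓝[≠] 0) (𝓝 (l ^ n * h 0)) := by
        have ht : Tendsto (fun z : ℂ => h (l * z)) (𝓝 0) (𝓝 (h 0)) := by
          have := hhc.tendsto.comp hmap
          simpa [Function.comp_def] using this
        exact (tendsto_const_nhds.mul ht).mono_left nhdsWithin_le_nhds
      refine hth.congr' ?_
      filter_upwards [hev'.filter_mono nhdsWithin_le_nhds, self_mem_nhdsWithin] with z hz hz0
      have hz0' : (z : ℂ) ≠ 0 := hz0
      rw [hz, mul_pow, mul_comm (l ^ n) (z ^ n), mul_assoc,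
        mul_div_cancel_left₀ _ (pow_ne_zero n hz0')]
    have hstrict : HasStrictDerivAt f₂ l z₂ := by
      have := ((hf₂.contDiff (n := 1)).contDiffAt (x := z₂)).hasStrictDerivAt (by norm_num)
      rwa [hd2] at this
    have hlitt := hstrict.isLittleO
    have hLt : Tendsto L₂ (𝓝 0) (𝓝 z₂) := by
      simpa [hL₂0] using (hL₂.continuous.tendsto 0)
    have hMt : Tendsto M (𝓝 0) (𝓝 z₂) := by
      simpa [hM0] using (hM.continuous.tendsto 0)
    have hpair : Tendsto (fun z : ℂ => (L₂ z, M z)) (𝓝 0) (𝓝 (z₂, z₂)) := by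
      rw [nhds_prod_eq]; exact hLt.prodMk hMt
    have hgne : ∀ᶠ z in 𝓝[≠] (0:ℂ), g z ≠ 0 := by
      filter_upwards [hev.filter_mono nhdsWithin_le_nhds,
        hevne.filter_mono nhdsWithin_le_nhds, self_mem_nhdsWithin] with z h1 h2 h3
      rw [h1]
      exact mul_ne_zero (pow_ne_zero _ (by simpa using h3)) h2
    have hQ : Tendsto (fun z : ℂ => (f₂ (L₂ z) - f₂ (M z)) / g z) (𝓝[≠] 0) (𝓝 l) := by
      rw [Metric.tendsto_nhds]
      intro ε hε
      have hb := hlitt.def (c := ε / 2) (by positivity)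
      have hb2 : ∀ᶠ z in 𝓝 (0:ℂ),
          ‖f₂ (L₂ z) - f₂ (M z) - (L₂ z - M z) * l‖ ≤ ε / 2 * ‖L₂ z - M z‖ := by
        have := hpair.eventually hb
        filter_upwards [this] with z hz
        simpa using hz
      filter_upwards [hb2.filter_mono nhdsWithin_le_nhds, hgne] with z hz hzne
      have hgz : L₂ z - M z = g z := rfl
      rw [dist_eq_norm]
      have heq2 : (f₂ (L₂ z) - f₂ (M z)) / g z - l
          = (f₂ (L₂ z) - f₂ (M z) - g z * l) / g z := by
        field_simp
      rw [heq2, norm_div]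
      rw [hgz] at hz
      have hpos : 0 < ‖g z‖ := norm_pos_iff.mpr hzne
      rw [div_lt_iff₀ hpos]
      calc ‖f₂ (L₂ z) - f₂ (M z) - g z * l‖ ≤ ε / 2 * ‖g z‖ := hz
        _ < ε * ‖g z‖ := by nlinarith
    have hT2 : Tendsto (fun z : ℂ => g (l * z) / z ^ n) (𝓝[≠] 0) (𝓝 (l * h 0)) := by
      have hhten : Tendsto h (𝓝[≠] (0:ℂ)) (𝓝 (h 0)) := hhc.tendsto.mono_left nhdsWithin_le_nhds
      have hprod := hQ.mul hhten
      refine Tendsto.congr' ?_ hprod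
      filter_upwards [hev.filter_mono nhdsWithin_le_nhds,
        hevne.filter_mono nhdsWithin_le_nhds, self_mem_nhdsWithin] with z h1 h2 h3
      have hz0' : (z : ℂ) ≠ 0 := h3
      rw [← hgfe z, h1]
      field_simp
    have heql : l ^ n * h 0 = l * h 0 := tendsto_nhds_unique hT1 hT2
    have hpow : l ^ n = l := mul_right_cancel₀ hh0 heql
    have habs : ‖l‖ ^ n = ‖l‖ := by
      rw [← norm_pow, hpow]
    have hlt : ‖l‖ < ‖l‖ ^ n := by
      calc ‖l‖ = ‖l‖ ^ 1 := (pow_one _).symm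
        _ < ‖l‖ ^ n := by
          exact pow_lt_pow_right₀ hrep (by omega)
    linarith
  have hev0 : g =ᶠ[𝓝 (0:ℂ)] 0 := analyticOrderAt_eq_top.mp horder
  have hganOn : AnalyticOnNhd ℂ g Set.univ := fun z _ => hg.analyticAt z
  have hEq := hganOn.eqOn_zero_of_preconnected_of_eventuallyEq_zero
    isPreconnected_univ (Set.mem_univ 0) hev0
  intro z
  have hz := hEq (Set.mem_univ z)
  have : L₂ z - M z = 0 := hz
  have := sub_eq_zero.mp this
  simpa [hMdef] using this
end

section
/- Let f be entire, z_0 a repelling fixed point of f with multiplier λ, and L a linearizer of f at z_0. If a ∈ ℂ has infinite backward orbit under f, then a is in the image of L. -/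
open Complex Metric Set intervalIntegral MeasureTheory

lemma entire_deriv {f : ℂ → ℂ} (hf : Differentiable ℂ f) : Differentiable ℂ (deriv f) := by
  have h1 : AnalyticOnNhd ℂ f Set.univ :=
    hf.differentiableOn.analyticOnNhd isOpen_univ
  exact differentiableOn_univ.mp h1.deriv.differentiableOn

lemma entire_primitive {h : ℂ → ℂ} (hh : Differentiable ℂ h) :
    ∃ P : ℂ → ℂ, ∀ z, HasDerivAt P (h z) z := by
  classical
  have hhc : Continuous h := hh.continuous
  have hh'c : Continuous (deriv h) := (entire_deriv hh).continuous
  refine ⟨fun z => ∫ t in (0:ℝ)..1, z * h ((t : ℂ) * z), fun x₀ => ?_⟩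
  set F' : ℂ → ℝ → ℂ := fun x t => h ((t:ℂ) * x) + x * ((t:ℂ) * deriv h ((t:ℂ) * x)) with hF'
  have hFxc : ∀ x : ℂ, Continuous fun t : ℝ => F' x t := by
    intro x
    have hmul : Continuous fun t : ℝ => (t : ℂ) * x :=
      Complex.continuous_ofReal.mul continuous_const
    exact (hhc.comp hmul).add (continuous_const.mul
      (Complex.continuous_ofReal.mul (hh'c.comp hmul)))
  have hcont : Continuous fun p : ℝ × ℂ => F' p.2 p.1 := by
    have hmul : Continuous fun p : ℝ × ℂ => (p.1 : ℂ) * p.2 :=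
      (Complex.continuous_ofReal.comp continuous_fst).mul continuous_snd
    have h1 : Continuous fun p : ℝ × ℂ => (p.1 : ℂ) := Complex.continuous_ofReal.comp continuous_fst
    exact (hhc.comp hmul).add (continuous_snd.mul (h1.mul (hh'c.comp hmul)))
  obtain ⟨C, hC⟩ := (((isCompact_Icc : IsCompact (Set.Icc (0:ℝ) 1)).prod
      (isCompact_closedBall x₀ 1))).exists_bound_of_continuousOn hcont.continuousOn
  have key := intervalIntegral.hasDerivAt_integral_of_dominated_loc_of_deriv_le
    (μ := volume) (a := 0) (b := 1) (F := fun x t => x * h ((t:ℂ) * x)) (F' := F')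
    (x₀ := x₀) (bound := fun _ => C) (s := ball x₀ 1) (ball_mem_nhds x₀ one_pos)
    (Filter.Eventually.of_forall fun x =>
      ((continuous_const.mul (hhc.comp (Complex.continuous_ofReal.mul continuous_const))).aestronglyMeasurable))
    ((continuous_const.mul (hhc.comp (Complex.continuous_ofReal.mul continuous_const))).intervalIntegrable 0 1)
    ((hFxc x₀).aestronglyMeasurable)
    (MeasureTheory.ae_of_all _ (fun t ht x hx => by
      refine hC (t, x) ⟨?_, ball_subset_closedBall hx⟩
      rw [Set.uIoc_of_le (zero_le_one : (0:ℝ) ≤ 1)] at ht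
      exact ⟨ht.1.le, ht.2⟩))
    (intervalIntegrable_const)
    (MeasureTheory.ae_of_all _ (fun t _ x _ => by
      have h1 : HasDerivAt (fun x : ℂ => h ((t:ℂ) * x)) ((t:ℂ) * deriv h ((t:ℂ) * x)) x := by
        have hout := (hh ((t:ℂ) * x)).hasDerivAt
        have hin : HasDerivAt (fun x : ℂ => (t:ℂ) * x) (t:ℂ) x := by
          simpa using (hasDerivAt_id x).const_mul (t:ℂ)
        have := HasDerivAt.comp x hout hin
        simpa [Function.comp_def, mul_comm] using this
      have := (hasDerivAt_id' x).mul h1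
      simpa [hF', Pi.mul_def] using this))
  rcases key with ⟨-, hkey⟩
  have hftc : (∫ t in (0:ℝ)..1, F' x₀ t) = h x₀ := by
    have hu : ∀ t ∈ Set.uIcc (0:ℝ) 1,
        HasDerivAt (fun s : ℝ => (s:ℂ) * h ((s:ℂ) * x₀)) (F' x₀ t) t := by
      intro t _
      have hw : HasDerivAt (fun z : ℂ => z * h (z * x₀)) (F' x₀ t) ((t:ℝ) : ℂ) := by
        have h1 : HasDerivAt (fun z : ℂ => h (z * x₀)) (x₀ * deriv h ((t:ℂ) * x₀)) (t:ℂ) := by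
          have hout := (hh ((t:ℂ) * x₀)).hasDerivAt
          have hin : HasDerivAt (fun z : ℂ => z * x₀) x₀ (t:ℂ) := by
            simpa using (hasDerivAt_id (t:ℂ)).mul_const x₀
          have := HasDerivAt.comp (t:ℂ) hout hin
          simpa [Function.comp_def, mul_comm] using this
        have h2 := (hasDerivAt_id (t:ℂ)).mul h1
        simp only [hF', one_mul, id_eq, Pi.mul_def] at h2 ⊢
        refine h2.congr_deriv ?_
        ring
      have := hw.comp_ofReal
      simpa using this
    rw [intervalIntegral.integral_eq_sub_of_hasDerivAt hu ((hFxc x₀).intervalIntegrable 0 1)]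
    simp
  rwa [hftc] at hkey

lemma entire_exp_form {w : ℂ → ℂ} (hw : Differentiable ℂ w) (h0 : ∀ z, w z ≠ 0) :
    ∃ g : ℂ → ℂ, Differentiable ℂ g ∧ ∀ z, w z = Complex.exp (g z) := by
  have hh : Differentiable ℂ (fun z => deriv w z / w z) := (entire_deriv hw).div hw h0
  obtain ⟨P, hP⟩ := entire_primitive hh
  set q : ℂ → ℂ := fun z => w z * Complex.exp (-P z) with hq
  have hq' : ∀ z, HasDerivAt q 0 z := by
    intro z
    have hexp : HasDerivAt (fun z => Complex.exp (-P z))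
        (Complex.exp (-P z) * -(deriv w z / w z)) z := ((hP z).neg).cexp
    have := ((hw z).hasDerivAt).mul hexp
    have e : deriv w z * cexp (-P z) + w z * (cexp (-P z) * -(deriv w z / w z)) = 0 := by
      rw [div_eq_mul_inv]
      field_simp [h0 z]
      ring
    exact e ▸ this
  have hconst : ∀ x : ℂ, q x = q 0 := by
    intro x
    exact is_const_of_deriv_eq_zero (fun z => (hq' z).differentiableAt)
      (fun z => (hq' z).deriv) x 0
  have hq0 : q 0 ≠ 0 := mul_ne_zero (h0 0) (Complex.exp_ne_zero _)
  obtain ⟨d, hd⟩ : ∃ d, Complex.exp d = q 0 := by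
    have : q 0 ∈ Set.range Complex.exp := by rw [Complex.range_exp]; exact hq0
    exact this
  refine ⟨fun z => P z + d, (fun z => ((hP z).differentiableAt.add_const d : DifferentiableAt ℂ _ z)), fun z => ?_⟩
  have h1 : w z = q z * Complex.exp (P z) := by
    rw [hq]; simp [mul_assoc, ← Complex.exp_add]
  rw [h1, hconst z, ← hd, ← Complex.exp_add, add_comm d (P z)]

lemma entire_ball_in_range {f : ℂ → ℂ} (hf : Differentiable ℂ f) :
    ∃ c : ℂ, ball c (‖deriv f 0‖ / 256) ⊆ Set.range f := by
  rcases eq_or_ne (deriv f 0) 0 with hd | hd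
  · refine ⟨0, fun y hy => ?_⟩
    exfalso
    have := mem_ball.mp hy
    rw [hd] at this
    simp at this
    exact absurd this (not_lt.mpr (norm_nonneg y))
  have hf'c : Continuous (deriv f) := (entire_deriv hf).continuous
  set φ : ℂ → ℝ := fun z => ‖deriv f z‖ * (1 - ‖z‖) with hφ
  have hφc : ContinuousOn φ (closedBall 0 1) :=
    ((continuous_norm.comp hf'c).mul
      (continuous_const.sub continuous_norm)).continuousOn
  obtain ⟨p, hp, hmax⟩ := (isCompact_closedBall (0:ℂ) 1).exists_isMaxOn
    ⟨0, mem_closedBall_self zero_le_one⟩ hφc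
  set m : ℝ := φ p with hm
  have hdpos : 0 < ‖deriv f 0‖ := by
    simpa [norm_pos_iff] using hd
  have hm0 : ‖deriv f 0‖ ≤ m := by
    have := hmax (mem_closedBall_self zero_le_one)
    simpa [hφ] using this
  have hmpos : 0 < m := lt_of_lt_of_le hdpos hm0
  have hp1 : ‖p‖ ≤ 1 := by simpa using hp
  set t : ℝ := 1 - ‖p‖ with ht
  have htpos : 0 < t := by
    rcases lt_or_eq_of_le hp1 with h | h
    · simpa [ht] using h
    · exfalso
      have : m = 0 := by simp [hm, hφ, ht, ← h]
      exact hmpos.ne' this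
  have ht1 : t ≤ 1 := by
    have := norm_nonneg p
    simp only [ht]
    linarith
  have hfp : ‖deriv f p‖ = m / t := by
    field_simp [hm, hφ, ht]
    simp only [hm, hφ, ht]
  -- bound on the derivative on the disk of radius t/2 around p
  have hkey : ∀ z : ℂ, z ∈ closedBall p (t / 2) → ‖deriv f z‖ ≤ 2 * m / t := by
    intro z hz
    have hz1 : ‖z‖ ≤ 1 - t / 2 := by
      have h1 : ‖z - p‖ ≤ t / 2 := by
        simpa [Complex.dist_eq] using (mem_closedBall.mp hz)
      calc ‖z‖ ≤ ‖p‖ + ‖z - p‖ := by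
            simpa using norm_add_le p (z - p)
        _ ≤ (1 - t) + t / 2 := by rw [ht]; linarith
        _ = 1 - t / 2 := by ring
    have hz2 : z ∈ closedBall (0:ℂ) 1 := by
      simp only [mem_closedBall, dist_zero_right]
      calc ‖z‖ ≤ 1 - t/2 := hz1
        _ ≤ 1 := by linarith
    have h3 : φ z ≤ m := hmax hz2
    have h4 : t / 2 ≤ 1 - ‖z‖ := by linarith
    have h5 : ‖deriv f z‖ * (t / 2) ≤ m := by
      calc ‖deriv f z‖ * (t / 2)
          ≤ ‖deriv f z‖ * (1 - ‖z‖) :=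
            mul_le_mul_of_nonneg_left h4 (norm_nonneg _)
        _ ≤ m := h3
    rw [le_div_iff₀ htpos]
    calc ‖deriv f z‖ * t = (‖deriv f z‖ * (t/2)) * 2 := by ring
      _ ≤ m * 2 := by linarith
      _ = 2 * m := by ring
  -- Schwarz lemma for deriv f on ball p (t/2)
  have schwarz : ∀ z ∈ ball p (t/2),
      dist (deriv f z) (deriv f p) ≤ (4*m/t) / (t/2) * dist z p := by
    intro z hz
    refine Complex.dist_le_div_mul_dist_of_mapsTo_ball
      ((entire_deriv hf).differentiableOn) (fun w hw => ?_) hz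
    have h1 : ‖deriv f w‖ ≤ 2*m/t :=
      hkey w (ball_subset_closedBall hw)
    have h2 : dist (deriv f w) (deriv f p) < 4*m/t := by
      calc dist (deriv f w) (deriv f p) ≤ ‖deriv f w‖ + ‖deriv f p‖ := dist_le_norm_add_norm _ _
        _ = ‖deriv f w‖ + ‖deriv f p‖ := rfl
        _ ≤ 2*m/t + m/t := by rw [hfp]; linarith
        _ = 3*m/t := by ring
        _ < 4*m/t := by
            have h3 : (0:ℝ) < m/t := div_pos hmpos htpos
            have : 3*(m/t) < 4*(m/t) := by linarith
            calc (3*m/t : ℝ) = 3*(m/t) := by ring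
              _ < 4*(m/t) := this
              _ = 4*m/t := by ring
    exact mem_closedBall.mpr h2.le
  set r : ℝ := t / 32 with hr
  have hrpos : 0 < r := by positivity
  have hderiv_close : ∀ z ∈ closedBall p r,
      ‖deriv f z - deriv f p‖ ≤ m / (4*t) := by
    intro z hz
    have hzball : z ∈ ball p (t/2) := by
      rw [mem_ball]
      calc dist z p ≤ r := mem_closedBall.mp hz
        _ < t/2 := by rw [hr]; linarith
    have := schwarz z hzball
    have hdzp : dist z p ≤ r := mem_closedBall.mp hz
    calc ‖deriv f z - deriv f p‖ = dist (deriv f z) (deriv f p) := by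
          rw [Complex.dist_eq]
      _ ≤ (4*m/t)/(t/2) * dist z p := this
      _ ≤ (4*m/t)/(t/2) * r := by
          refine mul_le_mul_of_nonneg_left hdzp ?_
          positivity
      _ = m / (4*t) := by rw [hr]; field_simp; ring
  -- mean value estimate for g z = f z - deriv f p * z
  have hmv : ∀ z ∈ sphere p r, m / 128 ≤ ‖f z - f p‖ := by
    intro z hz
    have hzc : z ∈ closedBall p r := sphere_subset_closedBall hz
    have hg : ∀ w ∈ closedBall p r,
        HasDerivWithinAt (fun z => f z - deriv f p * z) (deriv f w - deriv f p) (closedBall p r) w := by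
      intro w _
      have h1 : HasDerivAt (fun z => f z - deriv f p * z) (deriv f w - deriv f p * 1) w :=
        ((hf w).hasDerivAt).sub ((hasDerivAt_id w).const_mul (deriv f p))
      simpa using h1.hasDerivWithinAt
    have hgb : ∀ w ∈ closedBall p r, ‖deriv f w - deriv f p‖ ≤ m / (4*t) :=
      fun w hw => hderiv_close w hw
    have hmain := Convex.norm_image_sub_le_of_norm_hasDerivWithin_le hg hgb
      (convex_closedBall p r) (mem_closedBall_self hrpos.le) hzc
    have hzp : ‖z - p‖ = r := by
      simpa [Complex.dist_eq] using (mem_sphere_iff_norm.mp hz)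
    set A : ℂ := (f z - deriv f p * z) - (f p - deriv f p * p) with hA
    set B : ℂ := deriv f p * (z - p) with hB
    have hAle : ‖A‖ ≤ m/(4*t) * r := by
      calc ‖A‖ ≤ m/(4*t) * ‖z - p‖ := hmain
        _ = m/(4*t) * r := by rw [hzp]
    have hBeq : ‖B‖ = m/t * r := by
      rw [hB, norm_mul, hzp]
      rw [hfp]
    have hfzp : f z - f p = A + B := by rw [hA, hB]; ring
    have htri : ‖B‖ - ‖A‖ ≤ ‖A + B‖ := by
      have h1 : B = (A + B) - A := by ring
      calc ‖B‖ - ‖A‖ = ‖(A + B) - A‖ - ‖A‖ := by rw [← h1]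
        _ ≤ (‖A + B‖ + ‖A‖) - ‖A‖ := by
            have := norm_sub_le (A + B) A
            linarith
        _ = ‖A + B‖ := by ring
    have e1 : m/(4*t) * r = m/128 := by
      rw [hr]; field_simp; try ring
    have e2 : m/t * r = m/32 := by
      rw [hr]; field_simp; try ring
    rw [hfzp]
    have hAle' : ‖A‖ ≤ m/128 := by rw [← e1]; exact hAle
    calc (m:ℝ)/128 ≤ m/32 - m/128 := by linarith [hmpos.le]
      _ ≤ ‖B‖ - ‖A‖ := by rw [hBeq, e2]; linarith
      _ ≤ ‖A + B‖ := htri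
  -- frequently nonconstant near p
  have hfreq : ∃ᶠ z in nhds p, f z ≠ f p := by
    by_contra hcon
    rw [Filter.not_frequently] at hcon
    have heq : (fun z => f z) =ᶠ[nhds p] (fun _ => f p) := by
      filter_upwards [hcon] with z hz
      simpa using hz
    have : deriv f p = 0 := by
      have := heq.deriv_eq
      simpa using this
    rw [this] at hfp
    have h0 : m / t = 0 := by simpa using hfp.symm
    exact (div_pos hmpos htpos).ne' h0
  have himg := DiffContOnCl.ball_subset_image_closedBall
    (hf.diffContOnCl) hrpos (fun z hz => hmv z hz) hfreq
  refine ⟨f p, fun y hy => ?_⟩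
  have h1 : ‖deriv f 0‖ / 256 ≤ m / 128 / 2 := by
    have : m/128/2 = m/256 := by ring
    rw [this]
    exact div_le_div_of_nonneg_right hm0 (by norm_num)
  have : y ∈ ball (f p) (m/128/2) := mem_ball.mpr (lt_of_lt_of_le (mem_ball.mp hy) h1)
  obtain ⟨z, _, hz2⟩ := himg this
  exact ⟨z, hz2⟩

lemma large_ball {G : ℂ → ℂ} (hG : Differentiable ℂ G) {z₁ : ℂ} (hd : deriv G z₁ ≠ 0)
    {R : ℝ} (hR : 0 < R) : ∃ c : ℂ, ball c R ⊆ Set.range G := by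
  have habs : 0 < ‖deriv G z₁‖ := by simpa [norm_pos_iff] using hd
  set ρ : ℝ := 256 * R / ‖deriv G z₁‖ with hρ
  have hρpos : 0 < ρ := by positivity
  set f : ℂ → ℂ := fun z => G (z₁ + (ρ:ℂ) * z) with hf
  have hfd : Differentiable ℂ f :=
    hG.comp ((differentiable_const _).add ((differentiable_const _).mul differentiable_id))
  have hderiv : HasDerivAt f (deriv G z₁ * (ρ:ℂ)) 0 := by
    have hin : HasDerivAt (fun z : ℂ => z₁ + (ρ:ℂ) * z) ((ρ:ℂ)) 0 := by
      simpa using ((hasDerivAt_id (0:ℂ)).const_mul ((ρ:ℂ))).const_add z₁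
    have hout : HasDerivAt G (deriv G z₁) (z₁ + (ρ:ℂ) * 0) := by
      simpa using (hG z₁).hasDerivAt
    have := HasDerivAt.comp (0:ℂ) hout hin
    simpa [hf, Function.comp_def] using this
  have hd0 : ‖deriv f 0‖ = 256 * R := by
    rw [hderiv.deriv]
    rw [norm_mul]
    simp only [Complex.norm_real, Real.norm_eq_abs]
    rw [abs_of_pos hρpos, hρ]
    field_simp
  obtain ⟨c, hc⟩ := entire_ball_in_range hfd
  rw [hd0] at hc
  have : (256 * R) / 256 = R := by ring
  rw [this] at hc
  refine ⟨c, fun y hy => ?_⟩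
  obtain ⟨z, hz⟩ := hc hy
  exact ⟨z₁ + (ρ:ℂ) * z, hz⟩

lemma step_cos {F : ℂ → ℂ} (hF : Differentiable ℂ F) (h0 : ∀ z, F z ≠ 0) (h1 : ∀ z, F z ≠ 1) :
    ∃ G : ℂ → ℂ, Differentiable ℂ G ∧ ∀ z, Complex.cos (Real.pi * G z) = 2 * F z - 1 := by
  set u : ℂ → ℂ := fun z => 2 * F z - 1 with hu
  have hud : Differentiable ℂ u := ((differentiable_const _).mul hF).sub_const 1
  set w₁ : ℂ → ℂ := fun z => 4 * F z * (1 - F z) with hw₁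
  have hw₁d : Differentiable ℂ w₁ :=
    (((differentiable_const _).mul hF)).mul ((differentiable_const _).sub hF)
  have hw₁0 : ∀ z, w₁ z ≠ 0 := by
    intro z
    refine mul_ne_zero (mul_ne_zero (by norm_num) (h0 z)) ?_
    intro hcon
    exact h1 z (by linear_combination -hcon)
  obtain ⟨g₁, hg₁d, hg₁⟩ := entire_exp_form hw₁d hw₁0
  set v : ℂ → ℂ := fun z => Complex.exp (g₁ z / 2) with hv
  have hvd : Differentiable ℂ v := (hg₁d.div_const 2).cexp
  have hv2 : ∀ z, v z ^ 2 = w₁ z := by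
    intro z
    rw [hv]
    rw [← Complex.exp_nat_mul]
    rw [hg₁ z]
    congr 1
    ring
  have huv : ∀ z, u z ^ 2 + v z ^ 2 = 1 := by
    intro z
    rw [hv2, hu, hw₁]
    ring
  set q : ℂ → ℂ := fun z => u z + Complex.I * v z with hq2
  have hqinv : ∀ z, q z * (u z - Complex.I * v z) = 1 := by
    intro z
    have := huv z
    rw [hq2]
    linear_combination this - (Complex.I_sq + 1) * (v z)^2
  have hq0 : ∀ z, q z ≠ 0 := by
    intro z hcon
    have := hqinv z
    rw [hcon, zero_mul] at this
    exact zero_ne_one this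
  have hqd : Differentiable ℂ q := hud.add ((differentiable_const _).mul hvd)
  obtain ⟨g₂, hg₂d, hg₂⟩ := entire_exp_form hqd hq0
  refine ⟨fun z => g₂ z / (Real.pi * Complex.I), hg₂d.div_const _, fun z => ?_⟩
  have hπI : (Real.pi : ℂ) * Complex.I ≠ 0 :=
    mul_ne_zero (by exact_mod_cast Real.pi_ne_zero) Complex.I_ne_zero
  have harg : (Real.pi : ℂ) * (g₂ z / ((Real.pi:ℂ) * Complex.I)) * Complex.I = g₂ z := by
    field_simp
  have hcos : ∀ x : ℂ, Complex.cos x =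
      (Complex.exp (x * Complex.I) + Complex.exp (-x * Complex.I)) / 2 := by
    intro x
    rw [Complex.cos]
    try ring_nf
  rw [hcos, neg_mul, harg]
  have hexpneg : Complex.exp (-g₂ z) = u z - Complex.I * v z := by
    rw [Complex.exp_neg, ← hg₂ z]
    exact inv_eq_of_mul_eq_one_right (hqinv z)
  rw [← hg₂ z, hexpneg, hq2]
  ring

lemma net_point (c : ℂ) : ∃ (k : ℤ) (t : ℝ),
    (∃ m : ℤ, Real.cosh (Real.pi * t) = 2 * m + 1) ∧
    dist ((k : ℂ) + (t : ℂ) * Complex.I) c < 2 := by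
  set y : ℝ := |c.im| with hy
  have hy0 : 0 ≤ y := abs_nonneg _
  -- cosh π ≥ 3
  have hcoshpi : Real.cosh (Real.pi * (y+1)) ≥ Real.cosh (Real.pi * y) + 2 := by
    have hexp : Real.exp Real.pi ≥ 6 := by
      have h1 : Real.exp Real.pi = Real.exp (Real.pi/2) ^ 2 := by
        rw [← Real.exp_nat_mul]; norm_num; ring
      have h2 : Real.exp (Real.pi/2) ≥ 1 + Real.pi/2 := by
        have := Real.add_one_le_exp (Real.pi/2); linarith
      have h3 : (1 + Real.pi/2) ≥ 2.5 := by
        have := Real.pi_gt_three; linarith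
      have h4 : Real.exp (Real.pi/2) ≥ 2.5 := le_trans h3 h2
      rw [h1]
      nlinarith [Real.exp_pos (Real.pi/2)]
    have hcosh3 : Real.cosh Real.pi ≥ 3 := by
      rw [Real.cosh_eq]
      have := Real.exp_pos (-Real.pi)
      linarith
    have hsinh : 0 ≤ Real.sinh (Real.pi * y) := by
      rw [← Real.sinh_zero]
      exact Real.sinh_le_sinh.mpr (by positivity)
    have hsinhpi : 0 ≤ Real.sinh Real.pi := by
      rw [← Real.sinh_zero]
      exact Real.sinh_le_sinh.mpr Real.pi_pos.le
    have hch : 1 ≤ Real.cosh (Real.pi * y) := Real.one_le_cosh _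
    calc Real.cosh (Real.pi * (y+1)) = Real.cosh (Real.pi * y + Real.pi) := by ring_nf
      _ = Real.cosh (Real.pi*y) * Real.cosh Real.pi + Real.sinh (Real.pi*y) * Real.sinh Real.pi :=
          Real.cosh_add _ _
      _ ≥ Real.cosh (Real.pi*y) * 3 + 0 := by nlinarith
      _ ≥ Real.cosh (Real.pi*y) + 2 := by nlinarith
  set c₀ : ℝ := Real.cosh (Real.pi * y) with hc₀
  set m : ℤ := ⌈(c₀ - 1)/2⌉ with hmdef
  have hm1 : c₀ ≤ 2 * m + 1 := by
    have := Int.le_ceil ((c₀ - 1)/2)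
    have : ((c₀ - 1)/2 : ℝ) ≤ m := this
    linarith
  have hm2 : (2*m+1 : ℝ) ≤ c₀ + 2 := by
    have := Int.ceil_lt_add_one ((c₀ - 1)/2)
    have : (m : ℝ) < (c₀-1)/2 + 1 := this
    linarith
  -- IVT
  have hcont : ContinuousOn (fun t => Real.cosh (Real.pi * t)) (Set.Icc y (y+1)) :=
    (Real.continuous_cosh.comp (continuous_const.mul continuous_id)).continuousOn
  have hivt := intermediate_value_Icc (by linarith : y ≤ y + 1) hcont
  have hmem : (2*m+1 : ℝ) ∈ Set.Icc (Real.cosh (Real.pi * y)) (Real.cosh (Real.pi * (y+1))) := by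
    constructor
    · exact hm1
    · linarith
  obtain ⟨t, ht, hteq⟩ := hivt hmem
  set t' : ℝ := if 0 ≤ c.im then t else -t with ht'
  have hcosh' : Real.cosh (Real.pi * t') = 2*m+1 := by
    rw [ht']
    split_ifs
    · exact hteq
    · rw [mul_neg, Real.cosh_neg]; exact hteq
  refine ⟨round c.re, t', ⟨m, hcosh'⟩, ?_⟩
  have him : |t' - c.im| ≤ 1 := by
    rcases le_or_gt 0 c.im with h | h
    · have hyim : y = c.im := abs_of_nonneg h
      rw [ht', if_pos h]
      rw [hyim] at ht
      rcases ht with ⟨h1, h2⟩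
      rw [abs_le]; constructor <;> linarith
    · have hyim : y = -c.im := abs_of_neg h
      rw [ht', if_neg (not_le.mpr h)]
      rw [hyim] at ht
      rcases ht with ⟨h1, h2⟩
      rw [abs_le]; constructor <;> linarith
  have hre : |(round c.re : ℝ) - c.re| ≤ 1/2 := by
    have := abs_sub_round c.re
    rw [abs_sub_comm] at this
    exact this
  set w : ℂ := (round c.re : ℂ) + (t' : ℂ) * Complex.I with hw
  have hwre : (w - c).re = (round c.re : ℝ) - c.re := by
    simp [hw, Complex.add_re, Complex.sub_re]
  have hwim : (w - c).im = t' - c.im := by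
    simp [hw, Complex.add_im, Complex.sub_im]
  rw [Complex.dist_eq]
  calc ‖w - c‖ ≤ |(w-c).re| + |(w-c).im| := Complex.norm_le_abs_re_add_abs_im _
    _ ≤ 1/2 + 1 := by rw [hwre, hwim]; exact add_le_add hre him
    _ < 2 := by norm_num

lemma cos_grid (k : ℤ) (t : ℝ) :
    Complex.cos ((Real.pi:ℂ) * ((k:ℂ) + (t:ℂ) * Complex.I)) =
      (((-1:ℝ)^k * Real.cosh (Real.pi * t) : ℝ) : ℂ) := by
  have h1 : (Real.pi:ℂ) * ((k:ℂ) + (t:ℂ)*Complex.I) =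
      ((k:ℂ) * (Real.pi:ℂ)) + ((Real.pi * t : ℝ):ℂ) * Complex.I := by
    push_cast; ring
  rw [h1, Complex.cos_add, Complex.cos_mul_I]
  have h2 : Complex.sin ((k:ℂ)*(Real.pi:ℂ)) = 0 := Complex.sin_int_mul_pi k
  rw [h2, zero_mul, sub_zero]
  have h3 : Complex.cos ((k:ℂ)*(Real.pi:ℂ)) = (((-1:ℝ)^k : ℝ) : ℂ) := by
    have hr : Real.cos ((k:ℝ) * Real.pi) = (-1:ℝ)^k := by
      have := Real.cos_add_int_mul_pi 0 k
      simpa using this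
    calc Complex.cos ((k:ℂ)*(Real.pi:ℂ)) = Complex.cos (((k:ℝ)*Real.pi : ℝ):ℂ) := by
          push_cast; ring_nf
      _ = ((Real.cos ((k:ℝ)*Real.pi) : ℝ):ℂ) := (Complex.ofReal_cos _).symm
      _ = (((-1:ℝ)^k : ℝ):ℂ) := by rw [hr]
  rw [h3, ← Complex.ofReal_cosh]
  push_cast
  ring

lemma picard_const {F : ℂ → ℂ} (hF : Differentiable ℂ F) (h0 : ∀ z, F z ≠ 0)
    (h1 : ∀ z, F z ≠ 1) (x y : ℂ) : F x = F y := by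
  by_contra hne
  obtain ⟨G, hGd, hGcos⟩ := step_cos hF h0 h1
  have hGint : ∀ z (n : ℤ), G z ≠ (n : ℂ) := by
    intro z n hcon
    have h2 : Complex.cos ((Real.pi:ℂ) * G z) = 2 * F z - 1 := hGcos z
    rw [hcon] at h2
    have h3 : Complex.cos ((Real.pi:ℂ) * (n:ℂ)) = (((-1:ℝ)^n : ℝ) : ℂ) := by
      have := cos_grid n 0
      simpa using this
    rw [h3] at h2
    rcases Int.even_or_odd n with he | ho
    · rw [he.neg_one_zpow] at h2
      apply h1 z
      push_cast at h2
      linear_combination -h2/2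
    · rw [ho.neg_one_zpow] at h2
      apply h0 z
      push_cast at h2
      linear_combination -h2/2
  have hG0 : ∀ z, G z ≠ 0 := fun z => by simpa using hGint z 0
  have hG1 : ∀ z, G z ≠ 1 := fun z => by simpa using hGint z 1
  obtain ⟨H, hHd, hHcos⟩ := step_cos hGd hG0 hG1
  have hHne : H x ≠ H y := by
    intro hcon
    have hGne : G x ≠ G y := by
      intro hcon'
      apply hne
      have e : (2:ℂ) * F x - 1 = 2 * F y - 1 := by
        rw [← hGcos x, ← hGcos y, hcon']
      linear_combination e/2
    apply hGne
    have e : (2:ℂ) * G x - 1 = 2 * G y - 1 := by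
      rw [← hHcos x, ← hHcos y, hcon]
    linear_combination e/2
  have hHderiv : ∃ w, deriv H w ≠ 0 := by
    by_contra hall
    push_neg at hall
    exact hHne (is_const_of_deriv_eq_zero hHd hall x y)
  obtain ⟨w, hw⟩ := hHderiv
  obtain ⟨c, hc⟩ := large_ball hHd hw (by norm_num : (0:ℝ) < 2)
  obtain ⟨k, t, ⟨m, hm⟩, hdist⟩ := net_point c
  have hmem : (k:ℂ) + (t:ℂ) * Complex.I ∈ ball c 2 := mem_ball.mpr hdist
  obtain ⟨z, hz⟩ := hc hmem
  have h2 : Complex.cos ((Real.pi:ℂ) * H z) = 2 * G z - 1 := hHcos z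
  rw [hz, cos_grid, hm] at h2
  rcases Int.even_or_odd k with he | ho
  · rw [he.neg_one_zpow] at h2
    apply hGint z (m + 1)
    push_cast at h2 ⊢
    linear_combination -h2/2
  · rw [ho.neg_one_zpow] at h2
    apply hGint z (-m)
    push_cast at h2 ⊢
    linear_combination -h2/2

theorem infinite_backward_orbit_in_image_of_linearizer (f L : ℂ → ℂ)
    (hf : Differentiable ℂ f)
    (z₀ : ℂ) (hfix : f z₀ = z₀) (hrep : 1 < ‖deriv f z₀‖)
    (hL : Differentiable ℂ L) (hL0 : L 0 = z₀) (hL' : deriv L 0 ≠ 0)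
    (hLeq : ∀ z : ℂ, f (L z) = L (deriv f z₀ * z))
    (a : ℂ) (ha : {z : ℂ | ∃ n : ℕ, f^[n] z = a}.Infinite) :
    a ∈ Set.range L := by
  by_contra hnot
  have hstep : ∃ b, f b = a ∧ b ≠ a := by
    by_contra hcon
    push_neg at hcon
    have hall : ∀ (n : ℕ) (z : ℂ), f^[n] z = a → z = a := by
      intro n
      induction n with
      | zero => intro z hz; simpa using hz
      | succ n ih =>
        intro z hz
        rw [Function.iterate_succ_apply] at hz
        exact hcon z (ih _ hz)
    have hsub : {z : ℂ | ∃ n : ℕ, f^[n] z = a} ⊆ {a} := by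
      rintro z ⟨n, hn⟩
      exact hall n z hn
    exact ha (Set.Finite.subset (Set.finite_singleton a) hsub)
  obtain ⟨b, hba, hbne⟩ := hstep
  have hbnot : b ∉ Set.range L := by
    rintro ⟨u, hu⟩
    exact hnot ⟨deriv f z₀ * u, by rw [← hLeq u, hu, hba]⟩
  have hane : ∀ z, L z ≠ a := fun z hz => hnot ⟨z, hz⟩
  have hbne' : ∀ z, L z ≠ b := fun z hz => hbnot ⟨z, hz⟩
  have hd : b - a ≠ 0 := sub_ne_zero.mpr hbne
  set F : ℂ → ℂ := fun z => (L z - a) / (b - a) with hF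
  have hFd : Differentiable ℂ F := (hL.sub_const a).div_const _
  have hF0 : ∀ z, F z ≠ 0 := by
    intro z h
    rw [hF] at h
    rcases div_eq_zero_iff.mp h with h' | h'
    · exact hane z (sub_eq_zero.mp h')
    · exact hd h'
  have hF1 : ∀ z, F z ≠ 1 := by
    intro z h
    rw [hF] at h
    have h2 := (div_eq_one_iff_eq hd).mp h
    exact hbne' z (by linear_combination h2)
  have hconst := picard_const hFd hF0 hF1
  have hLconst : ∀ u v : ℂ, L u = L v := by
    intro u v
    have h2 := hconst u v
    rw [hF, div_eq_div_iff hd hd] at h2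
    have h3 := mul_right_cancel₀ hd h2
    linear_combination h3
  have hLeq' : L = fun _ => L 0 := funext fun z => hLconst z 0
  rw [hLeq'] at hL'
  simp at hL'
end

section
/- Let f be entire with a repelling fixed point z_0, multiplier λ, and linearizer L. Every critical value of L lies in ∪_{n≥0} f^n(Cv(f)) \ Ev(f), where Cv(f) = f({f' = 0}) is the set of critical values of f and Ev(f) is the set of exceptional values of f. -/
open Filter Topology

theorem critical_values_of_linearizer_subset (f L : ℂ → ℂ)
    (hf : Differentiable ℂ f)
    (z₀ : ℂ) (hfix : f z₀ = z₀) (hrep : 1 < ‖deriv f z₀‖)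
    (hL : Differentiable ℂ L) (hL0 : L 0 = z₀) (hL' : deriv L 0 ≠ 0)
    (hLeq : ∀ z : ℂ, f (L z) = L (deriv f z₀ * z)) :
    ∀ w : ℂ, (∃ z : ℂ, L z = w ∧ deriv L z = 0) →
      (w ∈ ⋃ n : ℕ, f^[n] '' (f '' {z : ℂ | deriv f z = 0})) ∧
      ¬ {z : ℂ | ∃ n : ℕ, f^[n] z = w}.Finite := by
  classical
  set lam := deriv f z₀ with hlam
  have hlam0 : lam ≠ 0 := by
    intro h
    rw [h] at hrep
    simp at hrep
    linarith
  rintro w ⟨z, hzw, hz'⟩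
  have hz0 : z ≠ 0 := fun h => hL' (h ▸ hz')
  -- iteration formula
  have key : ∀ (k : ℕ) (u : ℂ), f^[k] (L u) = L (lam ^ k * u) := by
    intro k
    induction k with
    | zero => intro u; simp
    | succ n ih =>
      intro u
      rw [Function.iterate_succ_apply', ih, hLeq]
      congr 1
      ring
  set a : ℕ → ℂ := fun k => z * lam⁻¹ ^ k with ha
  have haz : ∀ k, lam ^ k * a k = z := by
    intro k
    simp only [ha, inv_pow]
    field_simp
  have haL : ∀ k, f^[k] (L (a k)) = w := by
    intro k
    rw [key k (a k), haz k, hzw]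
  have ha0 : ∀ k, a k ≠ 0 := fun k =>
    mul_ne_zero hz0 (pow_ne_zero _ (inv_ne_zero hlam0))
  -- derivative identity
  have hD : ∀ u : ℂ, deriv f (L u) * deriv L u = lam * deriv L (lam * u) := by
    intro u
    have h1 : deriv (f ∘ L) u = deriv f (L u) * deriv L u :=
      deriv_comp u (hf.differentiableAt) (hL.differentiableAt)
    have h2 : (f ∘ L) = fun y => L (lam * y) := funext fun y => hLeq y
    have h3 : deriv (fun y => L (lam * y)) u = deriv L (lam * u) * lam := by
      have hc : DifferentiableAt ℂ (fun y : ℂ => lam * y) u :=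
        (differentiable_id.const_mul lam).differentiableAt
      have h4 := deriv_comp u (hL.differentiableAt (x := lam * u)) hc
      have hg : deriv (fun y : ℂ => lam * y) u = lam := by
        simpa using ((hasDerivAt_id u).const_mul lam).deriv
      calc deriv (fun y => L (lam * y)) u
          = deriv L (lam * u) * deriv (fun y : ℂ => lam * y) u := h4
        _ = deriv L (lam * u) * lam := by rw [hg]
    rw [← h1, h2, h3]
    ring
  -- analyticity
  have hLA : AnalyticOnNhd ℂ L Set.univ := fun x _ => hL.analyticAt x
  have hcont : ContinuousAt (deriv L) 0 := (hLA.deriv 0 trivial).continuousAt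
  have hatend : Tendsto a atTop (𝓝 0) := by
    have h1 : Tendsto (fun k : ℕ => lam⁻¹ ^ k) atTop (𝓝 0) := by
      apply tendsto_pow_atTop_nhds_zero_of_norm_lt_one
      rw [norm_inv]
      rw [inv_lt_one_iff₀]
      right
      exact hrep
    have := h1.const_mul z
    simpa [ha, inv_pow] using this
  have hexists : ∃ n, deriv L (a n) ≠ 0 := by
    have ht : Tendsto (fun k => deriv L (a k)) atTop (𝓝 (deriv L 0)) :=
      hcont.tendsto.comp hatend
    exact (ht.eventually_ne hL').exists
  constructor
  · -- first part
    set n := Nat.find hexists with hn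
    have hnprop : deriv L (a n) ≠ 0 := Nat.find_spec hexists
    have hn0 : n ≠ 0 := by
      intro h
      apply hnprop
      rw [h]
      simpa [ha] using hz'
    obtain ⟨m, hm⟩ : ∃ m, n = m + 1 := ⟨n - 1, (Nat.succ_pred_eq_of_ne_zero hn0).symm⟩
    have hmin : deriv L (a m) = 0 := by
      have := Nat.find_min hexists (show m < n by omega)
      simpa using this
    have hrel : lam * a (m + 1) = a m := by
      simp only [ha]
      have := mul_inv_cancel₀ hlam0
      linear_combination (z * lam⁻¹ ^ m) * this
    have hcrit : deriv f (L (a (m + 1))) = 0 := by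
      have := hD (a (m + 1))
      rw [hrel, hmin, mul_zero] at this
      have hne : deriv L (a (m + 1)) ≠ 0 := hm ▸ hnprop
      exact (mul_eq_zero.mp this).resolve_right hne
    refine Set.mem_iUnion.mpr ⟨m, ⟨f (L (a (m + 1))), ⟨L (a (m + 1)), hcrit, rfl⟩, ?_⟩⟩
    rw [← Function.iterate_succ_apply]
    have := haL n
    rw [hm] at this
    exact this
  · -- second part
    intro hS
    set S := {z : ℂ | ∃ n : ℕ, f^[n] z = w} with hSdef
    have hmem : ∀ k, L (a k) ∈ S := fun k => ⟨k, haL k⟩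
    haveI : Finite ↥S := hS.to_subtype
    obtain ⟨v, hv⟩ := Finite.exists_infinite_fiber (fun k : ℕ => (⟨L (a k), hmem k⟩ : S))
    have hinf : {k : ℕ | L (a k) = (v : ℂ)}.Infinite := by
      have h := Set.infinite_coe_iff.mp hv
      convert h using 1
      ext k
      simp [Set.mem_preimage, Subtype.ext_iff]
    have hfreq : ∃ᶠ k in atTop, L (a k) = (v : ℂ) :=
      Nat.frequently_atTop_iff_infinite.mpr hinf
    have hatend' : Tendsto a atTop (𝓝[≠] (0 : ℂ)) :=
      tendsto_nhdsWithin_of_tendsto_nhds_of_eventually_within a hatend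
        (Eventually.of_forall fun k => ha0 k)
    have hfreq2 : ∃ᶠ y in 𝓝[≠] (0 : ℂ), L y = (v : ℂ) := hatend'.frequently hfreq
    have heq : L =ᶠ[𝓝 (0 : ℂ)] fun _ => (v : ℂ) :=
      (AnalyticAt.frequently_eq_iff_eventually_eq (hL.analyticAt 0) analyticAt_const).mp hfreq2
    have : deriv L 0 = 0 := by
      rw [heq.deriv_eq]
      simp
    exact hL' this
end

section
/- Under the same hypotheses (p polynomial of degree d ≥ 2 with leading coefficient a_d, L a linearizer with p∘L(z) = L(λz), r > max{R_ε, R_L}), with K_ε = log((1+ε)|a_d|): log M(L, |λ|r) ≤ K_ε + d·log M(L, r). -/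
noncomputable def maxMod (L : ℂ → ℂ) (r : ℝ) : ℝ :=
  sSup ((fun z => ‖L z‖) '' Metric.sphere (0:ℂ) r)

theorem linearizer_maxmod_upper_growth (p : Polynomial ℂ) (d : ℕ) (hd : 2 ≤ d)
    (hdeg : p.natDegree = d) (z₀ lam : ℂ) (hfix : p.eval z₀ = z₀)
    (hlam : lam = (Polynomial.derivative p).eval z₀) (hrep : 1 < ‖lam‖)
    (L : ℂ → ℂ) (hL : Differentiable ℂ L) (hL0 : L 0 = z₀)
    (hLeq : ∀ z : ℂ, p.eval (L z) = L (lam * z))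
    (ε Rε RL : ℝ) (hε : 0 < ε) (hRε : 0 < Rε) (hRL : 1 ≤ RL)
    (hbound : ∀ z : ℂ, Rε < ‖z‖ →
      (1 - ε) * ‖p.leadingCoeff‖ * ‖z‖ ^ d ≤ ‖p.eval z‖ ∧
      ‖p.eval z‖ ≤ (1 + ε) * ‖p.leadingCoeff‖ * ‖z‖ ^ d)
    (hML : ∀ s : ℝ, RL ≤ s → s < maxMod L s) :
    ∀ r : ℝ, max Rε RL < r →
      Real.log (maxMod L (‖lam‖ * r)) ≤
        Real.log ((1 + ε) * ‖p.leadingCoeff‖) + d * Real.log (maxMod L r) := by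
  intro r hr
  have hRε_lt : Rε < r := lt_of_le_of_lt (le_max_left _ _) hr
  have hRL_lt : RL < r := lt_of_le_of_lt (le_max_right _ _) hr
  have hr1 : 1 < r := lt_of_le_of_lt hRL hRL_lt
  have hrpos : 0 < r := lt_trans one_pos hr1
  set s := maxMod L r with hs
  have hsr : r < s := hML r hRL_lt.le
  have hsε : Rε < s := lt_trans hRε_lt hsr
  have hspos : 0 < s := lt_trans hrpos hsr
  have hp0 : p ≠ 0 := by
    intro h
    rw [h] at hdeg
    simp at hdeg
    omega
  have hlc : ‖p.leadingCoeff‖ ≠ 0 := by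
    simpa using Polynomial.leadingCoeff_ne_zero.mpr hp0
  have hC : 0 < (1 + ε) * ‖p.leadingCoeff‖ := by
    apply mul_pos (by linarith)
    exact lt_of_le_of_ne (norm_nonneg _) (Ne.symm hlc)
  -- every point of L on sphere r is ≤ s
  have hmem_le : ∀ z : ℂ, ‖z‖ = r → ‖L z‖ ≤ s := by
    intro z hz
    apply le_csSup
    · exact ((isCompact_sphere (0:ℂ) r).image
        (continuous_norm.comp hL.continuous)).bddAbove
    · exact ⟨z, by simp [Complex.dist_eq, hz], rfl⟩
  -- maximum modulus principle for p on the closed ball of radius s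
  have hmaxmod : ∀ w : ℂ, ‖w‖ ≤ s →
      ‖p.eval w‖ ≤ (1 + ε) * ‖p.leadingCoeff‖ * s ^ d := by
    intro w hw
    have h1 : ∀ u ∈ frontier (Metric.ball (0:ℂ) s),
        ‖p.eval u‖ ≤ (1 + ε) * ‖p.leadingCoeff‖ * s ^ d := by
      intro u hu
      rw [frontier_ball _ hspos.ne'] at hu
      have hus : ‖u‖ = s := by simpa [Complex.dist_eq] using hu
      have := (hbound u (by rw [hus]; exact hsε)).2
      rw [hus] at this
      simpa using this
    have h2 : w ∈ closure (Metric.ball (0:ℂ) s) := by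
      rw [closure_ball _ hspos.ne']
      simpa [Complex.dist_eq] using hw
    have := Complex.norm_le_of_forall_mem_frontier_norm_le
      (Metric.isBounded_ball) (p.differentiable.diffContOnCl) h1 h2
    simpa using this
  -- the key bound
  have hkey : maxMod L (‖lam‖ * r) ≤
      (1 + ε) * ‖p.leadingCoeff‖ * s ^ d := by
    apply Real.sSup_le
    · rintro y ⟨w, hw, rfl⟩
      have hwr : ‖w‖ = ‖lam‖ * r := by
        simpa [Complex.dist_eq] using hw
      have hlam0 : lam ≠ 0 := by
        intro h; rw [h] at hrep; simp at hrep; linarith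
      set z := w / lam with hz
      have hzz : lam * z = w := by rw [hz, mul_div_assoc']; exact mul_div_cancel_left₀ w hlam0
      have hzr : ‖z‖ = r := by
        rw [hz, norm_div, hwr]
        exact mul_div_cancel_left₀ r (norm_ne_zero_iff.mpr hlam0)
      have : L w = p.eval (L z) := by rw [hLeq z, hzz]
      show ‖L w‖ ≤ _
      rw [this]
      exact hmaxmod (L z) (hmem_le z hzr)
    · positivity
  -- positivity of the left-hand side
  have hlr : RL ≤ ‖lam‖ * r := by nlinarith
  have hLpos : 0 < maxMod L (‖lam‖ * r) := by
    have := hML _ hlr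
    nlinarith
  calc Real.log (maxMod L (‖lam‖ * r))
      ≤ Real.log ((1 + ε) * ‖p.leadingCoeff‖ * s ^ d) :=
        Real.log_le_log hLpos hkey
    _ = Real.log ((1 + ε) * ‖p.leadingCoeff‖) + d * Real.log s := by
        rw [Real.log_mul hC.ne' (by positivity), Real.log_pow]
end

section
/- Let p be a polynomial of degree d ≥ 2 with repelling fixed point z_0 whose Julia set component J_{z_0}(p) is not equal to {z_0}, and let L be a linearizer of p at z_0. Then for R with M(L,r) > r for all r ≥ R, the set A_R(L) = {z : |L^n(z)| ≥ M^n(L,R) for all n ≥ 0} is not a spider's web. Specifically: there is no sequence of bounded simply connected domains G_n containing 0 with G_n ⊂ G_{n+1}, ∪G_n = ℂ, and ∂G_n ⊂ A_R(L). -/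
def escapes (p : Polynomial ℂ) : Set ℂ :=
  {z : ℂ | Filter.Tendsto (fun n : ℕ => ‖(fun w => p.eval w)^[n] z‖)
    Filter.atTop Filter.atTop}

open Set Metric Filter Function Bornology Topology Polynomial

namespace NSWaux

variable {L : ℂ → ℂ}

lemma sphere_neg_empty {r : ℝ} (hr : r < 0) : Metric.sphere (0:ℂ) r = ∅ := by
  ext z
  simp only [mem_sphere_iff_norm, sub_zero, mem_empty_iff_false, iff_false]
  intro h
  have := norm_nonneg z
  linarith

lemma bddAbove_image (hL : Continuous L) (r : ℝ) :
    BddAbove ((fun z => ‖L z‖) '' Metric.sphere (0:ℂ) r) :=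
  ((isCompact_sphere (0:ℂ) r).image (continuous_norm.comp hL)).bddAbove

lemma le_maxMod_of_mem (hL : Continuous L) {r : ℝ} {z : ℂ}
    (hz : ‖z‖ = r) : ‖L z‖ ≤ maxMod L r := by
  apply le_csSup (bddAbove_image hL r)
  exact mem_image_of_mem _ (by simpa [mem_sphere_iff_norm] using hz)

lemma maxMod_nonneg (hL : Continuous L) (r : ℝ) : 0 ≤ maxMod L r := by
  rcases lt_or_ge r 0 with h | h
  · rw [maxMod, sphere_neg_empty h]
    simp [Real.sSup_empty]
  · have hz : ‖(r : ℂ)‖ = r := by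
      simpa [Complex.norm_real, Real.norm_eq_abs] using abs_of_nonneg h
    exact (norm_nonneg _).trans (le_maxMod_of_mem hL hz)

/-- Maximum modulus principle form: pointwise bound inside the closed ball. -/
lemma abs_le_maxMod (hL : Differentiable ℂ L) {r : ℝ} (hr : 0 ≤ r) {z : ℂ}
    (hz : ‖z‖ ≤ r) : ‖L z‖ ≤ maxMod L r := by
  rcases eq_or_lt_of_le hr with h0 | h0
  · have hz0 : z = 0 := by
      have : ‖z‖ ≤ 0 := by rw [h0]; exact hz
      simpa using le_antisymm this (norm_nonneg z)
    subst hz0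
    exact le_maxMod_of_mem hL.continuous (by simp [← h0])
  · have := Complex.norm_le_of_forall_mem_frontier_norm_le (U := Metric.ball (0:ℂ) r)
      isBounded_ball (hL.diffContOnCl)
      (fun w hw => by
        rw [frontier_ball _ (ne_of_gt h0)] at hw
        have : ‖w‖ = r := by simpa using hw
        simpa using le_maxMod_of_mem hL.continuous this)
      (z := z) (by
        rw [closure_ball _ (ne_of_gt h0)]
        simpa [mem_closedBall_zero_iff] using hz)
    simpa using this

lemma maxMod_mono (hL : Differentiable ℂ L) {r r' : ℝ} (hr : 0 ≤ r) (h : r ≤ r') :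
    maxMod L r ≤ maxMod L r' := by
  apply csSup_le
  · exact (NormedSpace.sphere_nonempty.mpr hr).image _
  · rintro x ⟨z, hz, rfl⟩
    have : ‖z‖ = r := by simpa using hz
    exact abs_le_maxMod hL (hr.trans h) (this.le.trans h)

lemma exists_on_sphere_gt (hL : Continuous L) {c : ℝ} (hc : 0 ≤ c) (h : c < maxMod L c) :
    ∃ u : ℂ, ‖u‖ = c ∧ c < ‖L u‖ := by
  obtain ⟨x, hx, hcx⟩ := exists_lt_of_lt_csSup ((NormedSpace.sphere_nonempty.mpr hc).image _) h
  obtain ⟨u, hu, rfl⟩ := hx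
  exact ⟨u, by simpa using hu, hcx⟩

end NSWaux

namespace NSWaux2

lemma exists_escape_radius (p : Polynomial ℂ) (hd2 : 2 ≤ p.natDegree) :
    ∃ ρ : ℝ, 1 ≤ ρ ∧ ∀ z : ℂ, ρ < ‖z‖ →
      2 * ‖z‖ ≤ ‖p.eval z‖ := by
  have hp0 : p ≠ 0 := fun h => by simp [h] at hd2
  have hlead : p.coeff p.natDegree ≠ 0 := Polynomial.leadingCoeff_ne_zero.mpr hp0
  set cl : ℝ := ‖p.coeff p.natDegree‖ with hcl
  have hclpos : 0 < cl := norm_pos_iff.mpr hlead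
  set A : ℝ := ∑ i ∈ Finset.range p.natDegree, ‖p.coeff i‖ with hA
  have hA0 : 0 ≤ A := Finset.sum_nonneg fun i _ => norm_nonneg _
  refine ⟨max 1 ((A + 2) / cl), le_max_left _ _, fun z hz => ?_⟩
  have hz1 : (1:ℝ) < ‖z‖ := lt_of_le_of_lt (le_max_left _ _) hz
  have hz1' : (1:ℝ) ≤ ‖z‖ := hz1.le
  have hzpos : 0 < ‖z‖ := lt_trans one_pos hz1
  have hzA : A + 2 ≤ cl * ‖z‖ := by
    have h2 : (A + 2) / cl < ‖z‖ := lt_of_le_of_lt (le_max_right _ _) hz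
    calc A + 2 = ((A + 2) / cl) * cl := by field_simp
    _ ≤ ‖z‖ * cl := mul_le_mul_of_nonneg_right h2.le hclpos.le
    _ = cl * ‖z‖ := mul_comm _ _
  have heval : p.eval z
      = (∑ i ∈ Finset.range p.natDegree, p.coeff i * z ^ i)
        + p.coeff p.natDegree * z ^ p.natDegree := by
    rw [Polynomial.eval_eq_sum_range, Finset.sum_range_succ]
  -- bound the tail
  have htail : ‖∑ i ∈ Finset.range p.natDegree, p.coeff i * z ^ i‖
      ≤ A * ‖z‖ ^ (p.natDegree - 1) := by
    calc ‖∑ i ∈ Finset.range p.natDegree, p.coeff i * z ^ i‖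
        ≤ ∑ i ∈ Finset.range p.natDegree, ‖p.coeff i * z ^ i‖ := by
          exact norm_sum_le _ _
    _ ≤ ∑ i ∈ Finset.range p.natDegree,
          ‖p.coeff i‖ * ‖z‖ ^ (p.natDegree - 1) := by
        apply Finset.sum_le_sum
        intro i hi
        rw [norm_mul, norm_pow]
        apply mul_le_mul_of_nonneg_left _ (norm_nonneg _)
        have := Finset.mem_range.mp hi
        apply pow_le_pow_right₀ hz1'
        omega
    _ = A * ‖z‖ ^ (p.natDegree - 1) := by rw [← Finset.sum_mul]
  have hmain : ‖p.coeff p.natDegree * z ^ p.natDegree‖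
      = cl * ‖z‖ ^ p.natDegree := by
    rw [norm_mul, norm_pow]
  have hlow : cl * ‖z‖ ^ p.natDegree
      - A * ‖z‖ ^ (p.natDegree - 1) ≤ ‖p.eval z‖ := by
    rw [heval]
    have h' := norm_sub_norm_le (p.coeff p.natDegree * z ^ p.natDegree)
      (-(∑ i ∈ Finset.range p.natDegree, p.coeff i * z ^ i))
    rw [sub_neg_eq_add, norm_neg] at h'
    rw [hmain] at h'
    rw [add_comm] at h'
    linarith
  -- now the arithmetic
  have hpow : ‖z‖ ^ p.natDegree
      = ‖z‖ ^ (p.natDegree - 1) * ‖z‖ := by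
    rw [← pow_succ]
    congr 1
    omega
  have hpow1 : ‖z‖ ≤ ‖z‖ ^ (p.natDegree - 1) := by
    calc ‖z‖ = ‖z‖ ^ 1 := (pow_one _).symm
    _ ≤ _ := pow_le_pow_right₀ hz1' (by omega)
  have : 2 * ‖z‖ ≤ cl * ‖z‖ ^ p.natDegree
      - A * ‖z‖ ^ (p.natDegree - 1) := by
    rw [hpow]
    have hfac : 2 ≤ cl * ‖z‖ - A := by linarith
    have hppos : 0 < ‖z‖ ^ (p.natDegree - 1) := pow_pos hzpos _
    calc 2 * ‖z‖ ≤ 2 * ‖z‖ ^ (p.natDegree - 1) := by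
          apply mul_le_mul_of_nonneg_left hpow1 (by norm_num)
    _ ≤ (cl * ‖z‖ - A) * ‖z‖ ^ (p.natDegree - 1) := by
          apply mul_le_mul_of_nonneg_right hfac hppos.le
    _ = cl * (‖z‖ ^ (p.natDegree - 1) * ‖z‖)
        - A * ‖z‖ ^ (p.natDegree - 1) := by ring
  linarith

end NSWaux2

namespace NSWaux3

variable {p : Polynomial ℂ}

lemma escapes_succ_iff (p : Polynomial ℂ) (z : ℂ) :
    p.eval z ∈ escapes p ↔ z ∈ escapes p := by
  have hfun : (fun n : ℕ => ‖(fun w => p.eval w)^[n] (p.eval z)‖)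
      = fun n : ℕ => ‖(fun w => p.eval w)^[n + 1] z‖ := by
    funext n
    rw [Function.iterate_succ_apply]
  constructor
  · intro h
    have h' : Tendsto (fun n : ℕ => ‖(fun w => p.eval w)^[n + 1] z‖)
        atTop atTop := by
      simp only [escapes, mem_setOf_eq] at h
      rwa [hfun] at h
    exact (tendsto_add_atTop_iff_nat 1).mp h'
  · intro h
    show Tendsto _ atTop atTop
    rw [hfun]
    exact (tendsto_add_atTop_iff_nat 1).mpr h

lemma escapes_iterate : ∀ (n : ℕ) {z : ℂ},
    (fun w => p.eval w)^[n] z ∈ escapes p → z ∈ escapes p := by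
  intro n
  induction n with
  | zero => intro z h; exact h
  | succ k ih =>
    intro z h
    rw [Function.iterate_succ_apply] at h
    exact (escapes_succ_iff p z).mp (ih h)

/-- points beyond the escape radius escape. -/
lemma escapes_of_radius {ρ : ℝ} (hρ1 : 1 ≤ ρ)
    (hgrow : ∀ z : ℂ, ρ < ‖z‖ → 2 * ‖z‖ ≤ ‖p.eval z‖)
    {z : ℂ} (hz : ρ < ‖z‖) : z ∈ escapes p := by
  have key : ∀ n : ℕ, ρ < ‖(fun w => p.eval w)^[n] z‖
      ∧ 2 ^ n * ‖z‖ ≤ ‖(fun w => p.eval w)^[n] z‖ := by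
    intro n
    induction n with
    | zero => simpa using hz
    | succ k ih =>
      obtain ⟨ih1, ih2⟩ := ih
      have habs : 0 < ‖(fun w => p.eval w)^[k] z‖ :=
        lt_trans (by linarith) ih1
      have hstep := hgrow _ ih1
      constructor
      · rw [Function.iterate_succ_apply']
        calc ρ < ‖(fun w => p.eval w)^[k] z‖ := ih1
        _ ≤ 2 * ‖(fun w => p.eval w)^[k] z‖ := by linarith
        _ ≤ _ := hstep
      · rw [Function.iterate_succ_apply']
        calc (2:ℝ) ^ (k+1) * ‖z‖ = 2 * (2 ^ k * ‖z‖) := by ring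
        _ ≤ 2 * ‖(fun w => p.eval w)^[k] z‖ := by linarith
        _ ≤ _ := hstep
  have hbase : Tendsto (fun n : ℕ => 2 ^ n * ‖z‖) atTop atTop := by
    apply Tendsto.atTop_mul_const (by linarith : (0:ℝ) < ‖z‖)
    exact tendsto_pow_atTop_atTop_of_one_lt one_lt_two
  exact tendsto_atTop_mono (fun n => (key n).2) hbase

/-- non-escaping points have orbit bounded by the escape radius. -/
lemma orbit_bound {ρ : ℝ} (hρ1 : 1 ≤ ρ)
    (hgrow : ∀ z : ℂ, ρ < ‖z‖ → 2 * ‖z‖ ≤ ‖p.eval z‖)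
    {z : ℂ} (hz : z ∉ escapes p) (n : ℕ) :
    ‖(fun w => p.eval w)^[n] z‖ ≤ ρ := by
  by_contra h
  push_neg at h
  exact hz (escapes_iterate n (escapes_of_radius hρ1 hgrow h))

lemma frontier_escapes_bounded {ρ : ℝ} (hρ1 : 1 ≤ ρ)
    (hgrow : ∀ z : ℂ, ρ < ‖z‖ → 2 * ‖z‖ ≤ ‖p.eval z‖) :
    frontier (escapes p) ⊆ Metric.closedBall (0:ℂ) ρ := by
  intro x hx
  by_contra h
  have hxρ : ρ < ‖x‖ := by
    simpa [mem_closedBall_zero_iff, not_le] using h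
  have hopen : IsOpen {z : ℂ | ρ < ‖z‖} :=
    isOpen_lt continuous_const continuous_norm
  have hsub : {z : ℂ | ρ < ‖z‖} ⊆ escapes p :=
    fun z hz => escapes_of_radius hρ1 hgrow hz
  have hx' : x ∈ interior {z : ℂ | ρ < ‖z‖} := by
    rw [hopen.interior_eq]
    exact hxρ
  exact hx.2 (interior_mono hsub hx')

/-- the frontier of the escaping set is forward invariant. -/
lemma frontier_escapes_invariant {x : ℂ} (hx : x ∈ frontier (escapes p)) :
    p.eval x ∈ frontier (escapes p) := by
  rw [frontier_eq_closure_inter_closure] at hx ⊢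
  have hc : Continuous fun z : ℂ => p.eval z := p.continuous
  constructor
  · exact map_mem_closure (f := fun z : ℂ => p.eval z) hc hx.1
      (fun z hz => (escapes_succ_iff p z).mpr hz)
  · exact map_mem_closure (f := fun z : ℂ => p.eval z) hc hx.2
      (fun z (hz : z ∈ (escapes p)ᶜ) h => hz ((escapes_succ_iff p z).mp h))

end NSWaux3

namespace NSWaux4

variable {p : Polynomial ℂ}

lemma iterate_fixed {z₀ : ℂ} (hfix : p.eval z₀ = z₀) (n : ℕ) :
    (fun w => p.eval w)^[n] z₀ = z₀ := by
  induction n with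
  | zero => rfl
  | succ k ih => rw [Function.iterate_succ_apply', ih, hfix]

lemma fixed_not_escapes {z₀ : ℂ} (hfix : p.eval z₀ = z₀) : z₀ ∉ escapes p := by
  intro h
  have h' : Tendsto (fun _ : ℕ => ‖z₀‖) atTop atTop := by
    have : (fun n : ℕ => ‖(fun w => p.eval w)^[n] z₀‖)
        = fun _ : ℕ => ‖z₀‖ := by
      funext n
      rw [iterate_fixed hfix]
    simp only [escapes, mem_setOf_eq] at h
    rwa [this] at h
  obtain ⟨n, hn⟩ := (tendsto_atTop.mp h' (‖z₀‖ + 1)).exists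
  linarith

lemma iterate_hasDerivAt {z₀ lam : ℂ} (hfix : p.eval z₀ = z₀)
    (hlam : lam = (Polynomial.derivative p).eval z₀) (n : ℕ) :
    HasDerivAt ((fun w => p.eval w)^[n]) (lam ^ n) z₀ := by
  induction n with
  | zero => simpa using hasDerivAt_id z₀
  | succ k ih =>
    have hcomp : HasDerivAt (fun z => p.eval ((fun w => p.eval w)^[k] z))
        (lam * lam ^ k) z₀ := by
      have hp : HasDerivAt (fun w => p.eval w) lam ((fun w => p.eval w)^[k] z₀) := by
        rw [iterate_fixed hfix, hlam]
        exact p.hasDerivAt z₀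
      exact hp.comp z₀ ih
    have : (fun w => p.eval w)^[k+1] = fun z => p.eval ((fun w => p.eval w)^[k] z) := by
      funext z
      rw [Function.iterate_succ_apply']
    rw [this, pow_succ, mul_comm]
    exact hcomp

/-- A repelling fixed point lies in the frontier of the escaping set. -/
lemma repelling_mem_frontier {z₀ lam : ℂ} (hfix : p.eval z₀ = z₀)
    (hlam : lam = (Polynomial.derivative p).eval z₀) (hrep : 1 < ‖lam‖)
    {ρ : ℝ} (hρ1 : 1 ≤ ρ)
    (hgrow : ∀ z : ℂ, ρ < ‖z‖ → 2 * ‖z‖ ≤ ‖p.eval z‖) :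
    z₀ ∈ frontier (escapes p) := by
  rw [frontier_eq_closure_inter_closure]
  constructor
  · -- z₀ ∈ closure (escapes p)
    rw [_root_.mem_closure_iff]
    intro O hO hzO
    by_contra hiO
    push_neg at hiO
    rw [Metric.isOpen_iff] at hO
    obtain ⟨ε, hε, hball⟩ := hO z₀ hzO
    have hnoesc : ∀ z ∈ Metric.ball z₀ ε, z ∉ escapes p := by
      intro z hz hesc
      exact (Set.eq_empty_iff_forall_notMem.mp hiO z ⟨hball hz, hesc⟩)
    -- all iterates bounded by ρ on the ball
    have hbound : ∀ n : ℕ, ∀ z ∈ Metric.ball z₀ ε,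
        ‖(fun w => p.eval w)^[n] z‖ ≤ ρ :=
      fun n z hz => NSWaux3.orbit_bound hρ1 hgrow (hnoesc z hz) n
    -- Schwarz lemma
    have hz₀ρ : ‖z₀‖ ≤ ρ := by
      simpa [iterate_fixed hfix] using hbound 0 z₀ (mem_ball_self hε)
    have hkey : ∀ n : ℕ, ‖lam‖ ^ n ≤ (2 * ρ + 1) / ε := by
      intro n
      have hdiff : DifferentiableOn ℂ ((fun w => p.eval w)^[n]) (Metric.ball z₀ ε) :=
        ((p.differentiable).iterate n).differentiableOn
      have hmaps : MapsTo ((fun w => p.eval w)^[n]) (Metric.ball z₀ ε)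
          (Metric.ball ((fun w => p.eval w)^[n] z₀) (2 * ρ + 1)) := by
        intro z hz
        rw [iterate_fixed hfix]
        rw [mem_ball, dist_eq_norm]
        calc ‖(fun w => p.eval w)^[n] z - z₀‖
            ≤ ‖(fun w => p.eval w)^[n] z‖ + ‖z₀‖ := norm_sub_le _ _
        _ ≤ ρ + ρ := by
            have h1 := hbound n z hz
            exact add_le_add h1 hz₀ρ
        _ < 2 * ρ + 1 := by linarith
      have hs := Complex.norm_deriv_le_div_of_mapsTo_ball hdiff (hmaps.mono_right Metric.ball_subset_closedBall) hε
      have hderiv : deriv ((fun w => p.eval w)^[n]) z₀ = lam ^ n :=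
        (iterate_hasDerivAt hfix hlam n).deriv
      rw [hderiv] at hs
      calc ‖lam‖ ^ n = ‖lam ^ n‖ := (norm_pow _ _).symm
      _ ≤ (2 * ρ + 1) / ε := hs
    have hdiv : Tendsto (fun n : ℕ => ‖lam‖ ^ n) atTop atTop :=
      tendsto_pow_atTop_atTop_of_one_lt hrep
    obtain ⟨n, hn⟩ := (tendsto_atTop.mp hdiv ((2 * ρ + 1) / ε + 1)).exists
    have := hkey n
    linarith
  · -- z₀ ∈ closure (escapes p)ᶜ
    exact subset_closure (fixed_not_escapes hfix)

end NSWaux4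

namespace NSWaux5

/-- If the connected component of `z₀` in a closed bounded set `J` is nontrivial, then for
every `ε > 0` the connected component of `z₀` in `J ∩ closedBall z₀ ε` is nontrivial. -/
lemma exists_small_continuum {J : Set ℂ} (hJc : IsClosed J) (hJb : IsBounded J)
    {z₀ : ℂ} (hz₀ : z₀ ∈ J) (hnt : connectedComponentIn J z₀ ≠ {z₀}) {ε : ℝ} (hε : 0 < ε) :
    ∃ y ∈ connectedComponentIn (J ∩ Metric.closedBall z₀ ε) z₀, y ≠ z₀ := by
  classical
  -- a point of the big component different from z₀
  have hz₀C : z₀ ∈ connectedComponentIn J z₀ := mem_connectedComponentIn hz₀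
  have hssub : {z₀} ⊂ connectedComponentIn J z₀ := by
    rw [ssubset_iff_subset_ne]
    exact ⟨singleton_subset_iff.mpr hz₀C, fun h => hnt h.symm⟩
  obtain ⟨y₀, hy₀C, hy₀⟩ := exists_of_ssubset hssub
  rw [mem_singleton_iff] at hy₀
  set δ : ℝ := min ε (dist y₀ z₀) with hδdef
  have hdist : 0 < dist y₀ z₀ := dist_pos.mpr hy₀
  have hδ : 0 < δ := lt_min hε hdist
  set K : Set ℂ := J ∩ Metric.closedBall z₀ δ with hK
  have hz₀K : z₀ ∈ K := ⟨hz₀, mem_closedBall_self hδ.le⟩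
  have hKcpt : IsCompact K := by
    apply Metric.isCompact_of_isClosed_isBounded
    · exact hJc.inter Metric.isClosed_closedBall
    · exact hJb.subset inter_subset_left
  -- if the small component is nontrivial, we are done
  by_cases hQ : ∃ y ∈ connectedComponentIn K z₀, y ≠ z₀
  · obtain ⟨y, hyQ, hyne⟩ := hQ
    refine ⟨y, ?_, hyne⟩
    have hsub : connectedComponentIn K z₀ ⊆ J ∩ Metric.closedBall z₀ ε := by
      refine (connectedComponentIn_subset K z₀).trans ?_
      intro w hw
      exact ⟨hw.1, closedBall_subset_closedBall (min_le_left _ _) hw.2⟩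
    exact (isPreconnected_connectedComponentIn).subset_connectedComponentIn
      (mem_connectedComponentIn hz₀K) hsub hyQ
  -- otherwise the small component is {z₀}; find a small clopen neighborhood
  push_neg at hQ
  exfalso
  have hQsing : connectedComponentIn K z₀ = {z₀} := by
    apply Subset.antisymm
    · intro w hw
      rw [mem_singleton_iff]
      by_contra h
      exact h (hQ w hw)
    · exact singleton_subset_iff.mpr (mem_connectedComponentIn hz₀K)
  -- move to the subtype
  haveI : CompactSpace K := isCompact_iff_compactSpace.mp hKcpt
  set x : K := ⟨z₀, hz₀K⟩ with hx
  have hcc : connectedComponent x = {x} := by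
    have him : (↑) '' connectedComponent x = {z₀} := by
      rw [← connectedComponentIn_eq_image hz₀K, hQsing]
    apply Subset.antisymm
    · intro w hw
      have : (w : ℂ) ∈ ({z₀} : Set ℂ) := him ▸ mem_image_of_mem _ hw
      rw [mem_singleton_iff] at this ⊢
      exact Subtype.ext this
    · exact singleton_subset_iff.mpr mem_connectedComponent
  -- the open set O in the subtype
  set O : Set K := ((↑) : K → ℂ) ⁻¹' (Metric.ball z₀ δ) with hO
  have hOopen : IsOpen O := (Metric.isOpen_ball).preimage continuous_subtype_val
  have hxO : x ∈ O := by
    simp only [hO, mem_preimage]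
    exact mem_ball_self hδ
  -- for each point outside O, a clopen set containing x avoiding it
  have hclopen : ∀ y : K, y ∉ O → ∃ Z : Set K, IsClopen Z ∧ x ∈ Z ∧ y ∉ Z := by
    intro y hy
    have hyx : y ∉ connectedComponent x := by
      rw [hcc, mem_singleton_iff]
      rintro rfl
      exact hy hxO
    rw [connectedComponent_eq_iInter_isClopen, mem_iInter] at hyx
    push_neg at hyx
    obtain ⟨⟨Z, hZclopen, hxZ⟩, hyZ⟩ := hyx
    exact ⟨Z, hZclopen, hxZ, hyZ⟩
  choose Zf hZf using hclopen
  -- compactness: finitely many suffice to cover Oᶜ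
  have hcptOc : IsCompact Oᶜ := (hOopen.isClosed_compl).isCompact
  have hcover : Oᶜ ⊆ ⋃ (y : {w : K // w ∉ O}), (Zf y.1 y.2)ᶜ := by
    intro w hw
    exact mem_iUnion.mpr ⟨⟨w, hw⟩, (hZf w hw).2.2⟩
  obtain ⟨t, ht⟩ := hcptOc.elim_finite_subcover (fun y : {w : K // w ∉ O} => (Zf y.1 y.2)ᶜ)
    (fun y => (hZf y.1 y.2).1.1.isOpen_compl) hcover
  set Z : Set K := ⋂ y ∈ t, Zf y.1 y.2 with hZdef
  have hZclopen : IsClopen Z :=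
    isClopen_biInter_finset (fun y _ => (hZf y.1 y.2).1)
  have hxZ : x ∈ Z := mem_iInter₂.mpr fun y _ => (hZf y.1 y.2).2.1
  have hZO : Z ⊆ O := by
    intro w hw
    by_contra hwO
    have := ht hwO
    rw [mem_iUnion] at this
    obtain ⟨y, hy⟩ := this
    rw [mem_iUnion] at hy
    obtain ⟨hyt, hyw⟩ := hy
    exact hyw (mem_iInter₂.mp hw y hyt)
  -- Z is induced-open: write it as a preimage of an open set W in ℂ
  obtain ⟨W, hWopen, hZW⟩ := isOpen_induced_iff.mp hZclopen.2
  set Zval : Set ℂ := ((↑) : K → ℂ) '' Z with hZval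
  have hz₀Zval : z₀ ∈ Zval := mem_image_of_mem _ hxZ
  have hZvalball : Zval ⊆ Metric.ball z₀ δ := by
    rintro w ⟨w', hw', rfl⟩
    exact hZO hw'
  have hZvalJ : Zval ⊆ J := by
    rintro w ⟨w', hw', rfl⟩
    exact w'.2.1
  have hZvalclosed : IsClosed Zval := by
    have : IsCompact Zval :=
      (hZclopen.1.isCompact).image continuous_subtype_val
    exact this.isClosed
  have hZvaleq : Zval = J ∩ (W ∩ Metric.ball z₀ δ) := by
    apply Subset.antisymm
    · rintro w ⟨w', hw', rfl⟩
      refine ⟨w'.2.1, ?_, hZO hw'⟩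
      have : w' ∈ Subtype.val ⁻¹' W := by rw [hZW]; exact hw'
      exact this
    · rintro w ⟨hwJ, hwW, hwball⟩
      have hwK : w ∈ K := ⟨hwJ, Metric.ball_subset_closedBall hwball⟩
      have : (⟨w, hwK⟩ : K) ∈ Z := by
        rw [← hZW] at *
        exact hwW
      exact ⟨⟨w, hwK⟩, this, rfl⟩
  -- the big component is preconnected; use the separation
  have hC : IsPreconnected (connectedComponentIn J z₀) := isPreconnected_connectedComponentIn
  have hsep := hC (W ∩ Metric.ball z₀ δ) Zvalᶜ
    (hWopen.inter Metric.isOpen_ball) hZvalclosed.isOpen_compl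
    (by
      intro w hwC
      by_cases hw : w ∈ Zval
      · left
        have := hZvaleq ▸ hw
        exact this.2
      · right
        exact hw)
    (by
      refine ⟨z₀, hz₀C, ?_⟩
      have := hZvaleq ▸ hz₀Zval
      exact this.2)
    (by
      refine ⟨y₀, hy₀C, fun hy => ?_⟩
      have : dist y₀ z₀ < δ := hZvalball hy
      have : δ ≤ dist y₀ z₀ := min_le_right _ _
      linarith)
  obtain ⟨w, hwC, hwu, hwv⟩ := hsep
  apply hwv
  rw [hZvaleq]
  exact ⟨(connectedComponentIn_subset J z₀) hwC, hwu⟩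

end NSWaux5

namespace NSWaux6

variable {L : ℂ → ℂ}

lemma L_nonconstant (hL' : deriv L 0 ≠ 0) : ∃ x y : ℂ, L x ≠ L y := by
  by_contra h
  push_neg at h
  have hconst : L = fun _ => L 0 := funext fun x => by simpa using h x 0
  rw [hconst] at hL'
  simp at hL'

lemma iterate_nonconstant (hL : Differentiable ℂ L) (hL' : deriv L 0 ≠ 0) (k : ℕ) :
    ∃ x y : ℂ, L^[k + 1] x ≠ L^[k + 1] y := by
  induction k with
  | zero => simpa using L_nonconstant hL'
  | succ n ih =>
    obtain ⟨x₀, y₀, hxy⟩ := ih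
    by_contra hcon
    push_neg at hcon
    set g : ℂ → ℂ := L^[n + 1] with hg
    set a : ℂ := g x₀ with ha
    set b : ℂ := g y₀ with hb
    have hab : a ≠ b := hxy
    set c : ℂ := L^[n + 2] x₀ with hc
    have hgc : ∀ z : ℂ, L (g z) = c := by
      intro z
      have h1 : L^[n + 2] z = L (g z) := by
        rw [hg, Function.iterate_succ_apply']
      have h2 : L^[n + 2] z = L^[n + 2] x₀ := hcon z x₀
      rw [← h1, h2, hc]
    -- the range of g is a connected set with at least two points
    set A : Set ℂ := range g with hA
    have hAconn : IsPreconnected A := by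
      have : A = g '' univ := by rw [image_univ]
      rw [this]
      exact isPreconnected_univ.image g (hL.iterate (n+1)).continuous.continuousOn
    have haA : a ∈ A := mem_range_self x₀
    have hbA : b ∈ A := mem_range_self y₀
    -- a is an accumulation point of A
    have hfreq : ∃ᶠ z in 𝓝[≠] a, z ∈ A := by
      by_contra hev
      rw [Filter.not_frequently] at hev
      rw [eventually_nhdsWithin_iff] at hev
      obtain ⟨U, hUH, hUopen, haU⟩ := _root_.eventually_nhds_iff.mp hev
      have hsep := hAconn U {a}ᶜ hUopen isOpen_compl_singleton
        (by
          intro z hz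
          by_cases hza : z = a
          · left; rw [hza]; exact haU
          · right; exact hza)
        ⟨a, haA, haU⟩
        ⟨b, hbA, fun hba => hab (by rw [mem_singleton_iff] at hba; rw [hba])⟩
      obtain ⟨w, hwA, hwU, hwa⟩ := hsep
      exact hUH w hwU hwa hwA
    have hfreq' : ∃ᶠ z in 𝓝[≠] a, L z = (fun _ : ℂ => c) z := by
      apply hfreq.mono
      rintro z ⟨w, rfl⟩
      exact hgc w
    -- identity theorem
    have hLA : AnalyticOnNhd ℂ L univ := fun z _ => hL.analyticAt z
    have hcA : AnalyticOnNhd ℂ (fun _ : ℂ => c) univ := analyticOnNhd_const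
    have heq := hLA.eqOn_of_preconnected_of_frequently_eq hcA isPreconnected_univ
      (mem_univ a) hfreq'
    have hLc : L = fun _ => c := funext fun x => heq (mem_univ x)
    rw [hLc] at hL'
    simp at hL'

/-- the minimum modulus of a nonconstant entire iterate is arbitrarily small (Liouville). -/
lemma exists_small_iterate (hL : Differentiable ℂ L) (hL' : deriv L 0 ≠ 0) (k : ℕ)
    (hk : 1 ≤ k) {c : ℝ} (hc : 0 < c) : ∃ w : ℂ, ‖L^[k] w‖ < c := by
  by_contra h
  push_neg at h
  have hne : ∀ w : ℂ, L^[k] w ≠ 0 := by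
    intro w hw
    have := h w
    rw [hw] at this
    simp at this
    linarith
  set g : ℂ → ℂ := fun w => (L^[k] w)⁻¹ with hg
  have hgd : Differentiable ℂ g := (hL.iterate k).inv hne
  have hgb : IsBounded (range g) := by
    rw [isBounded_iff_forall_norm_le]
    refine ⟨c⁻¹, ?_⟩
    rintro x ⟨w, rfl⟩
    rw [hg]
    simp only [norm_inv]
    exact inv_anti₀ hc (h w)
  obtain ⟨C, hC⟩ := hgd.exists_eq_const_of_bounded hgb
  have hconst : ∀ w : ℂ, L^[k] w = C⁻¹ := by
    intro w
    have hCw : (L^[k] w)⁻¹ = C := congrFun hC w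
    rw [← hCw, inv_inv]
  obtain ⟨x, y, hxy⟩ := iterate_nonconstant hL hL' (k - 1)
  have hk1 : k - 1 + 1 = k := by omega
  rw [hk1] at hxy
  exact hxy ((hconst x).trans (hconst y).symm)

/-- the exterior of a closed ball in ℂ is connected. -/
lemma isConnected_exterior {r : ℝ} (hr : 0 ≤ r) :
    IsConnected {z : ℂ | r < ‖z‖} := by
  have hmap : {z : ℂ | r < ‖z‖}
      = (fun q : ℝ × ℂ => q.1 • q.2) '' ((Ioi r) ×ˢ (sphere (0:ℂ) 1)) := by
    ext z
    simp only [mem_setOf_eq, mem_image, mem_prod, mem_Ioi, mem_sphere_iff_norm, sub_zero]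
    constructor
    · intro hz
      have hz0 : z ≠ 0 := by
        intro h0
        rw [h0] at hz
        simp at hz
        linarith
      refine ⟨⟨‖z‖, ‖z‖⁻¹ • z⟩, ⟨?_, ?_⟩, ?_⟩
      · simpa using hz
      · rw [norm_smul, norm_inv, norm_norm]
        rw [inv_mul_cancel₀ (norm_ne_zero_iff.mpr hz0)]
      · simp only
        rw [smul_smul]
        rw [mul_inv_cancel₀ (norm_ne_zero_iff.mpr hz0), one_smul]
    · rintro ⟨⟨t, u⟩, ⟨ht, hu⟩, rfl⟩
      simp only
      have : ‖t • u‖ = |t| * ‖u‖ := by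
        rw [norm_smul, Real.norm_eq_abs]
      rw [this]
      have : ‖u‖ = 1 := hu
      rw [this, mul_one, abs_of_pos (lt_of_le_of_lt hr ht)]
      exact ht
  rw [hmap]
  apply IsConnected.image
  · apply IsConnected.prod
    · exact isConnected_Ioi
    · apply isConnected_sphere _ (0:ℂ) zero_le_one
      rw [Complex.rank_real_complex]
      exact Cardinal.one_lt_two
  · exact (continuous_fst.smul continuous_snd).continuousOn

end NSWaux6

theorem no_spiders_web_if_julia_component_nontrivial (p : Polynomial ℂ) (d : ℕ)
    (hd : 2 ≤ d) (hdeg : p.natDegree = d) (z₀ lam : ℂ) (hfix : p.eval z₀ = z₀)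
    (hlam : lam = (Polynomial.derivative p).eval z₀) (hrep : 1 < ‖lam‖)
    (L : ℂ → ℂ) (hL : Differentiable ℂ L) (hL0 : L 0 = z₀) (hL' : deriv L 0 ≠ 0)
    (hLeq : ∀ z : ℂ, p.eval (L z) = L (lam * z))
    (hJ : connectedComponentIn (frontier (escapes p)) z₀ ≠ {z₀})
    (R : ℝ) (hR : ∀ r : ℝ, R ≤ r → r < maxMod L r) :
    ¬ ∃ G : ℕ → Set ℂ,
        (∀ n, IsOpen (G n)) ∧ (∀ n, Bornology.IsBounded (G n)) ∧
        (∀ n, IsConnected (G n)) ∧ (∀ n, SimplyConnectedSpace (G n)) ∧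
        (∀ n, (0:ℂ) ∈ G n) ∧ (∀ n, G n ⊆ G (n + 1)) ∧ (⋃ n, G n) = Set.univ ∧
        (∀ n, frontier (G n) ⊆
          {z : ℂ | ∀ k : ℕ, (fun s => maxMod L s)^[k] R ≤ ‖L^[k] z‖}) := by
  rintro ⟨G, hGo, hGb, -, -, -, -, hGU, hGfr⟩
  have hd2 : 2 ≤ p.natDegree := by rw [hdeg]; exact hd
  obtain ⟨ρ, hρ1, hgrow⟩ := NSWaux2.exists_escape_radius p hd2
  set J : Set ℂ := frontier (escapes p) with hJdef
  have hJbdd : J ⊆ Metric.closedBall 0 ρ := NSWaux3.frontier_escapes_bounded hρ1 hgrow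
  have hz₀J : z₀ ∈ J := NSWaux4.repelling_mem_frontier hfix hlam hrep hρ1 hgrow
  have hJclosed : IsClosed J := isClosed_frontier
  have hJinv : ∀ x ∈ J, p.eval x ∈ J := fun x hx => NSWaux3.frontier_escapes_invariant hx
  -- the set S of points whose L-image is in the Julia set
  set S : Set ℂ := {z : ℂ | L z ∈ J} with hSdef
  have hS0 : (0:ℂ) ∈ S := by
    show L 0 ∈ J
    rw [hL0]
    exact hz₀J
  have hSbound : ∀ z ∈ S, ‖L z‖ ≤ ρ := by
    intro z hz
    have := hJbdd hz
    rwa [mem_closedBall_zero_iff] at this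
  have hSlam : ∀ z ∈ S, lam * z ∈ S := by
    intro z hz
    show L (lam * z) ∈ J
    rw [← hLeq]
    exact hJinv _ hz
  -- local inverse of L at 0
  have hsd : HasStrictDerivAt L (deriv L 0) 0 := by
    obtain ⟨ps, hps⟩ := hL.analyticAt 0
    have h1 := hps.hasStrictDerivAt
    have h2 : (ps 1 fun _ => 1) = deriv L 0 := h1.hasDerivAt.deriv.symm
    rwa [h2] at h1
  set efd := hsd.hasStrictFDerivAt_equiv hL' with hefd
  set e := efd.toOpenPartialHomeomorph L with he
  have hecoe : ∀ z, e z = L z := fun z => by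
    rw [he, HasStrictFDerivAt.toOpenPartialHomeomorph_coe]
  have h0src : (0:ℂ) ∈ e.source := efd.mem_toOpenPartialHomeomorph_source
  have hz₀tgt : z₀ ∈ e.target := by
    have := efd.image_mem_toOpenPartialHomeomorph_target
    rwa [hL0] at this
  obtain ⟨ε, hε, hballtgt⟩ :=
    (nhds_basis_closedBall.mem_iff).mp (e.open_target.mem_nhds hz₀tgt)
  -- a nontrivial continuum in J near z₀
  have hJb' : IsBounded J := (isBounded_closedBall).subset hJbdd
  obtain ⟨y, hyQ, hyne⟩ := NSWaux5.exists_small_continuum hJclosed hJb' hz₀J hJ hε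
  set Q : Set ℂ := connectedComponentIn (J ∩ Metric.closedBall z₀ ε) z₀ with hQdef
  have hQsub : Q ⊆ J ∩ Metric.closedBall z₀ ε := connectedComponentIn_subset _ _
  have hQtgt : Q ⊆ e.target := fun w hw => hballtgt (hQsub hw).2
  have hz₀Q : z₀ ∈ Q := mem_connectedComponentIn ⟨hz₀J, mem_closedBall_self hε.le⟩
  -- pull it back through the local inverse
  set C₀ : Set ℂ := e.symm '' Q with hC₀def
  have hC₀conn : IsPreconnected C₀ :=
    (isPreconnected_connectedComponentIn).image _ (e.symm.continuousOn.mono hQtgt)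
  have he0 : e 0 = z₀ := by rw [hecoe, hL0]
  have hsymm0 : e.symm z₀ = 0 := by
    have := e.left_inv h0src
    rwa [he0] at this
  have h0C₀ : (0:ℂ) ∈ C₀ := ⟨z₀, hz₀Q, hsymm0⟩
  have hC₀S : C₀ ⊆ S := by
    rintro _ ⟨w, hwQ, rfl⟩
    show L (e.symm w) ∈ J
    have h1 : L (e.symm w) = w := by
      rw [← hecoe]
      exact e.right_inv (hQtgt hwQ)
    rw [h1]
    exact (hQsub hwQ).1
  set a : ℂ := e.symm y with hadef
  have haC₀ : a ∈ C₀ := mem_image_of_mem _ hyQ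
  have hane : a ≠ 0 := by
    intro h
    apply hyne
    have h1 : e (e.symm y) = y := e.right_inv (hQtgt hyQ)
    rw [hadef] at h
    rw [h, he0] at h1
    exact h1.symm
  -- the unbounded connected set T
  set T : Set ℂ := ⋃ m : ℕ, (fun z : ℂ => lam ^ m * z) '' C₀ with hTdef
  have hT0 : (0:ℂ) ∈ T := by
    apply mem_iUnion.mpr
    exact ⟨0, 0, h0C₀, by simp⟩
  have hTconn : IsPreconnected T := by
    apply isPreconnected_iUnion
    · exact ⟨0, mem_iInter.mpr fun m => ⟨0, h0C₀, by simp⟩⟩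
    · intro m
      exact hC₀conn.image _ (continuous_mul_left _).continuousOn
  have hSpow : ∀ m : ℕ, ∀ z ∈ S, lam ^ m * z ∈ S := by
    intro m
    induction m with
    | zero => intro z hz; simpa using hz
    | succ k ih =>
      intro z hz
      have h1 := hSlam _ (ih z hz)
      have h2 : lam * (lam ^ k * z) = lam ^ (k + 1) * z := by ring
      rwa [h2] at h1
  have hTS : T ⊆ S := by
    rintro z hz
    obtain ⟨m, hm⟩ := mem_iUnion.mp hz
    obtain ⟨w, hwC₀, rfl⟩ := hm
    exact hSpow m w (hC₀S hwC₀)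
  have hTbig : ∀ b : ℝ, ∃ z ∈ T, b < ‖z‖ := by
    intro b
    have hapos : 0 < ‖a‖ := by
      simpa [norm_pos_iff] using hane
    have hdiv : Tendsto (fun m : ℕ => ‖lam‖ ^ m * ‖a‖) atTop atTop :=
      (tendsto_pow_atTop_atTop_of_one_lt hrep).atTop_mul_const hapos
    obtain ⟨m, hm⟩ := (tendsto_atTop.mp hdiv (b + 1)).exists
    refine ⟨lam ^ m * a, mem_iUnion.mpr ⟨m, a, haC₀, rfl⟩, ?_⟩
    rw [norm_mul, norm_pow]
    linarith
  -- the sequence of iterated maximal moduli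
  set msq : ℕ → ℝ := fun k => (fun s => maxMod L s)^[k] R with hmsqdef
  have hmsq0 : msq 0 = R := rfl
  have hmsq_succ : ∀ k, msq (k + 1) = maxMod L (msq k) := by
    intro k
    rw [hmsqdef]
    simp only
    rw [Function.iterate_succ_apply']
  have hmsq_R : ∀ k, R ≤ msq k := by
    intro k
    induction k with
    | zero => exact le_of_eq hmsq0.symm
    | succ j ih =>
      rw [hmsq_succ]
      exact ih.trans (hR _ ih).le
  have hmsq_lt : ∀ k, msq k < msq (k + 1) := by
    intro k
    rw [hmsq_succ]
    exact hR _ (hmsq_R k)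
  have hmono : StrictMono msq := strictMono_nat_of_lt_succ hmsq_lt
  have hmsq_nonneg : ∀ k, 0 ≤ msq (k + 1) := by
    intro k
    rw [hmsq_succ]
    exact NSWaux.maxMod_nonneg hL.continuous _
  -- divergence of msq
  have hdiv : ∀ b : ℝ, ∃ k, b < msq k := by
    intro b
    by_contra hcon
    push_neg at hcon
    have hbdd : BddAbove (range msq) := ⟨b, by rintro x ⟨k, rfl⟩; exact hcon k⟩
    set c : ℝ := ⨆ k, msq k with hcdef
    have hle : ∀ k, msq k ≤ c := fun k => le_ciSup hbdd k
    have hc1 : msq 1 < c := lt_of_lt_of_le (hmsq_lt 1) (hle 2)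
    have hc0 : 0 < c := lt_of_le_of_lt (hmsq_nonneg 0) hc1
    have hRc : R ≤ c := (hmsq_R 0).trans (hle 0)
    obtain ⟨u, huabs, hugt⟩ := NSWaux.exists_on_sphere_gt hL.continuous hc0.le (hR c hRc)
    have htend : Tendsto msq atTop (𝓝 c) := tendsto_atTop_ciSup hmono.monotone hbdd
    have hcontg : Continuous fun t : ℝ => ‖L (((t / c : ℝ) : ℂ) * u)‖ := by
      apply continuous_norm.comp
      apply hL.continuous.comp
      exact (Complex.continuous_ofReal.comp (continuous_id.div_const c)).mul continuous_const
    have htend2 : Tendsto (fun k => ‖L (((msq k / c : ℝ) : ℂ) * u)‖)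
        atTop (𝓝 (‖L (((c / c : ℝ) : ℂ) * u)‖)) :=
      (hcontg.tendsto c).comp htend
    have hval : ‖L (((c / c : ℝ) : ℂ) * u)‖ = ‖L u‖ := by
      rw [div_self hc0.ne']
      norm_num
    rw [hval] at htend2
    have hev := htend2.eventually (eventually_gt_nhds (by linarith : c < ‖L u‖))
    obtain ⟨k, hkgt, hk1⟩ := (hev.and (eventually_ge_atTop 1)).exists
    have hknn : 0 ≤ msq k := by
      obtain ⟨j, rfl⟩ := Nat.exists_eq_add_of_le hk1
      rw [add_comm]
      exact hmsq_nonneg j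
    have habs : ‖((msq k / c : ℝ) : ℂ) * u‖ = msq k := by
      rw [norm_mul, Complex.norm_real, Real.norm_eq_abs, huabs, abs_of_nonneg (by positivity)]
      field_simp
    have hub : ‖L (((msq k / c : ℝ) : ℂ) * u)‖ ≤ maxMod L (msq k) :=
      NSWaux.abs_le_maxMod hL hknn (le_of_eq habs)
    have : maxMod L (msq k) ≤ c := by
      rw [← hmsq_succ]
      exact hle (k + 1)
    linarith
  -- choose K beyond the Julia bound
  obtain ⟨K₀, hK₀⟩ := hdiv ρ
  set K : ℕ := K₀ + 1 with hKdef
  have hKρ : ρ < msq K := lt_of_lt_of_le hK₀ (hmono.monotone (Nat.le_succ K₀))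
  have hK1 : 1 ≤ K := Nat.le_add_left 1 K₀
  have hmsqKpos : 0 < msq K := lt_trans (by linarith) hKρ
  -- a point with small K-th iterate
  obtain ⟨wq, hwq⟩ := NSWaux6.exists_small_iterate hL hL' K hK1 hmsqKpos
  obtain ⟨n, hn⟩ : ∃ n, wq ∈ G n := by
    have h' : wq ∈ ⋃ n, G n := by rw [hGU]; trivial
    exact mem_iUnion.mp h'
  -- the compact image of the closure of G n under the K-th iterate of L
  have hGncpt : IsCompact (closure (G n)) := (hGb n).isCompact_closure
  set A : Set ℂ := L^[K] '' closure (G n) with hAdef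
  have hAcpt : IsCompact A := hGncpt.image (hL.iterate K).continuous
  have hAclosed : IsClosed A := hAcpt.isClosed
  set V : Set ℂ := L^[K] '' G n with hVdef
  have hVA : V ⊆ A := image_mono subset_closure
  have hVopen : IsOpen V := by
    rcases AnalyticOnNhd.is_constant_or_isOpen
        (fun z _ => (hL.iterate K).analyticAt z) isPreconnected_univ with hconst | hopen
    · exfalso
      obtain ⟨w0, hw0⟩ := hconst
      obtain ⟨x, y, hxy⟩ := NSWaux6.iterate_nonconstant hL hL' K₀
      exact hxy ((hw0 x (mem_univ x)).trans (hw0 y (mem_univ y)).symm)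
    · exact hopen (G n) (subset_univ _) (hGo n)
  have hq : L^[K] wq ∈ V := mem_image_of_mem _ hn
  -- a radius bound for A
  obtain ⟨ρA', hρA'⟩ := hAcpt.isBounded.subset_closedBall 0
  set ρA : ℝ := max ρA' 0 with hρAdef
  have hρA0 : 0 ≤ ρA := le_max_right _ _
  have hAball : A ⊆ Metric.closedBall 0 ρA :=
    hρA'.trans (Metric.closedBall_subset_closedBall (le_max_left _ _))
  set Wex : Set ℂ := {z : ℂ | ρA < ‖z‖} with hWdef
  have hWA : Wex ⊆ Aᶜ := by
    intro z hz hzA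
    have h1 := hAball hzA
    rw [mem_closedBall_zero_iff] at h1
    exact absurd h1 (not_le.mpr hz)
  set x₁ : ℂ := ((ρA + 1 : ℝ) : ℂ) with hx₁def
  have hx₁W : x₁ ∈ Wex := by
    show ρA < ‖x₁‖
    rw [hx₁def, Complex.norm_real, Real.norm_eq_abs, abs_of_nonneg (by linarith)]
    linarith
  set U : Set ℂ := connectedComponentIn Aᶜ x₁ with hUdef
  have hUopen : IsOpen U := hAclosed.isOpen_compl.connectedComponentIn
  have hWU : Wex ⊆ U :=
    (NSWaux6.isConnected_exterior hρA0).isPreconnected.subset_connectedComponentIn hx₁W hWA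
  have hUA : U ⊆ Aᶜ := connectedComponentIn_subset _ _
  set F : Set ℂ := Uᶜ with hFdef
  have hFclosed : IsClosed F := hUopen.isClosed_compl
  have hVF : V ⊆ F := fun v hv hvU => (hUA hvU) (hVA hv)
  -- the frontier of F is inside A
  have hfrFA : frontier F ⊆ A := by
    intro x hx
    rw [hFdef, frontier_compl] at hx
    by_contra hxA
    have hxU : x ∉ U := by
      intro hxU'
      rw [frontier, hUopen.interior_eq] at hx
      exact hx.2 hxU'
    have hxcomp : x ∈ connectedComponentIn Aᶜ x := mem_connectedComponentIn hxA
    have hopenx : IsOpen (connectedComponentIn Aᶜ x) :=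
      hAclosed.isOpen_compl.connectedComponentIn
    have hclU : x ∈ closure U := by
      rw [frontier, hUopen.interior_eq] at hx
      exact hx.1
    obtain ⟨w, hw1, hw2⟩ := _root_.mem_closure_iff.mp hclU _ hopenx hxcomp
    have he1 : connectedComponentIn Aᶜ x = connectedComponentIn Aᶜ w :=
      connectedComponentIn_eq hw1
    have he2 : connectedComponentIn Aᶜ x₁ = connectedComponentIn Aᶜ w :=
      connectedComponentIn_eq hw2
    exact hxU (by rw [hUdef, he2, ← he1]; exact hxcomp)
  -- frontier points of F come from the frontier of G n
  have hfrF' : ∀ x ∈ frontier F, ∃ w ∈ frontier (G n), L^[K] w = x := by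
    intro x hx
    obtain ⟨w, hwcl, hwx⟩ := hfrFA hx
    have hxV : x ∉ V := by
      intro hxV
      have hxint : x ∈ interior F := interior_maximal hVF hVopen hxV
      exact Set.disjoint_left.mp disjoint_interior_frontier hxint hx
    have hwGn : w ∉ G n := fun h => hxV ⟨w, h, hwx⟩
    refine ⟨w, ?_, hwx⟩
    rw [frontier, (hGo n).interior_eq]
    exact ⟨hwcl, hwGn⟩
  have hfrFnorm : ∀ x ∈ frontier F, msq K ≤ ‖x‖ ∧ ρ < ‖L x‖ := by
    intro x hx
    obtain ⟨w, hwfr, rfl⟩ := hfrF' x hx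
    have hcond := hGfr n hwfr
    refine ⟨hcond K, ?_⟩
    have h1 := hcond (K + 1)
    have h2 : L^[K+1] w = L (L^[K] w) := Function.iterate_succ_apply' L K w
    rw [h2] at h1
    have h3 : ρ < msq (K + 1) := lt_trans hKρ (hmsq_lt K)
    exact lt_of_lt_of_le h3 h1
  -- the ball of radius msq K sits inside the interior of F
  have hqF : L^[K] wq ∈ F := hVF hq
  have hBint : Metric.ball (0:ℂ) (msq K) ⊆ interior F := by
    have hBconn : IsPreconnected (Metric.ball (0:ℂ) (msq K)) :=
      (convex_ball _ _).isPreconnected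
    have hdisj : Disjoint (interior F) U := by
      rw [Set.disjoint_left]
      intro z hz hzU
      exact (interior_subset hz : z ∈ F) hzU
    have hcover : Metric.ball (0:ℂ) (msq K) ⊆ interior F ∪ U := by
      intro z hz
      have hzfr : z ∉ frontier F := by
        intro hzf
        have h1 := (hfrFnorm z hzf).1
        rw [mem_ball_zero_iff] at hz
        linarith
      by_cases hzF : z ∈ F
      · left
        by_contra hzint
        exact hzfr (by rw [hFclosed.frontier_eq]; exact ⟨hzF, hzint⟩)
      · right
        exact not_not.mp hzF
    have hne : (Metric.ball (0:ℂ) (msq K) ∩ interior F).Nonempty := by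
      refine ⟨L^[K] wq, ?_, interior_maximal hVF hVopen hq⟩
      rw [mem_ball_zero_iff]
      exact hwq
    exact hBconn.subset_left_of_subset_union isOpen_interior hUopen hdisj hcover hne
  have h0F : (0:ℂ) ∈ F := interior_subset (hBint (mem_ball_self hmsqKpos))
  -- the unbounded connected set T must cross the frontier of F
  have hTcross : ∃ t ∈ T, t ∈ frontier F := by
    by_contra hcon
    push_neg at hcon
    have hdisj : Disjoint U (interior F) := by
      rw [Set.disjoint_left]
      intro z hzU hzint
      exact (interior_subset hzint : z ∈ F) hzU
    have hcover : T ⊆ U ∪ interior F := by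
      intro z hz
      by_cases hzF : z ∈ F
      · right
        by_contra hzint
        exact hcon z hz (by rw [hFclosed.frontier_eq]; exact ⟨hzF, hzint⟩)
      · left
        exact not_not.mp hzF
    have hTU : (T ∩ U).Nonempty := by
      obtain ⟨z, hzT, hzbig⟩ := hTbig ρA
      exact ⟨z, hzT, hWU hzbig⟩
    have hsub := hTconn.subset_left_of_subset_union hUopen isOpen_interior hdisj hcover hTU
    exact h0F (hsub hT0)
  obtain ⟨t, htT, htfr⟩ := hTcross
  have h1 := (hfrFnorm t htfr).2
  have h2 := hSbound t (hTS htT)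
  linarith
end
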